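/- arXiv:1111.4372 — 9 statements merged into one kernel-verified Lean document; each statement's English description precedes it below -/
import Mathlib

section
/- There exists a constant c such that for all binary strings a, b and every natural number n with C(a,b) ≤ n: C(b | a, n) ≤ log₂(N_a) + c, where N_a is the number of binary strings y with C(a,y) ≤ n. -/
set_option maxHeartbeats 1000000


/-- Binary strings. -/
abbrev BinStr := List Bool

/-- Standard encoding of a binary string as a natural number. -/
def enc (a : BinStr) : ℕ := Encodable.encode a

/-- A (conditional) machine: it takes a program (a binary string) and a condition
(a natural number, which encodes the conditioning data: a number, a string via `enc`,
or a tuple combined with the standard pairing `Nat.pair`) and possibly outputs a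
natural number (encoding the result in the same way). -/
abbrev Machine := BinStr → ℕ →. ℕ

/-- Conditional Kolmogorov complexity of `x` given condition `y`, with respect to the
machine `U`: the minimal length of a program `p` such that `U p y = x`. -/
noncomputable def cplx (U : Machine) (x y : ℕ) : ℕ :=
  sInf {n | ∃ p : BinStr, p.length = n ∧ x ∈ U p y}

/-- Unconditional Kolmogorov complexity: conditional complexity with the trivial
condition `0`. -/
noncomputable def cplx0 (U : Machine) (x : ℕ) : ℕ := cplx U x 0

/-- `U` is an optimal universal machine for plain complexity: it is partial computable
and simulates every partial computable machine with at most a constant overhead in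
program length. -/
def IsOptimal (U : Machine) : Prop :=
  Partrec₂ U ∧
    ∀ V : Machine, Partrec₂ V →
      ∃ c : ℕ, ∀ (p : BinStr) (y x : ℕ), x ∈ V p y →
        ∃ q : BinStr, q.length ≤ p.length + c ∧ x ∈ U q y

/-- A machine is prefix-free if, for every condition, the set of its halting programs
is prefix-free: no halting program is a proper prefix of another halting program. -/
def PrefixFreeMachine (M : Machine) : Prop :=
  ∀ (y : ℕ) (p q : BinStr), p <+: q → (M p y).Dom → (M q y).Dom → p = q

/-- `U` is an optimal universal prefix-free machine: it is partial computable,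
prefix-free, and simulates every partial computable prefix-free machine with at most
a constant overhead in program length. -/
def IsPrefixOptimal (U : Machine) : Prop :=
  Partrec₂ U ∧ PrefixFreeMachine U ∧
    ∀ V : Machine, Partrec₂ V → PrefixFreeMachine V →
      ∃ c : ℕ, ∀ (p : BinStr) (y x : ℕ), x ∈ V p y →
        ∃ q : BinStr, q.length ≤ p.length + c ∧ x ∈ U q y

namespace KV
open Nat.Partrec (Code) 
open Nat.Partrec.Code

def idx (p : BinStr) : ℕ := p.foldl (fun n b => 2 * n + cond b 1 0) 1

def step (c : Code) (e n s : ℕ) : List ℕ :=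
  (List.range (s+1)).filterMap fun k =>
    ((Encodable.decode (α := BinStr) k).bind fun q =>
        if q.length ≤ n then evaln (s+1) c (Nat.pair k 0) else none).bind
      fun m =>
        if m.unpair.1 = e ∧
            (Encodable.decode (α := BinStr) m.unpair.2).map
              (fun y => Encodable.encode y) = some m.unpair.2
        then some m else none

def ins (L : List ℕ) (m : ℕ) : List ℕ := if m ∈ L then L else L ++ [m]

def E (c : Code) (e n s : ℕ) : List ℕ :=
  ((List.range (s+1)).flatMap (step c e n)).foldl ins []

def f (c : Code) (p : BinStr) (z s : ℕ) : Option ℕ :=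
  ((E c z.unpair.1 z.unpair.2 s)[idx p - 1]?).map fun m => m.unpair.2

def V (c : Code) : Machine := fun p z => Nat.rfindOpt (f c p z)

open Primrec in
lemma idx_primrec : Primrec idx := by
  have h : Primrec₂ (fun (_ : BinStr) (sb : ℕ × Bool) => 2 * sb.1 + cond sb.2 1 0) :=
    (nat_add.comp (nat_mul.comp (const 2) (fst.comp snd))
      (Primrec.cond (snd.comp snd) (const 1) (const 0))).to₂
  exact (list_foldl .id (const 1) h)

open Primrec in
lemma step_primrec (c : Code) : Primrec fun x : (ℕ × ℕ) × ℕ => step c x.1.1 x.1.2 x.2 := by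
  apply Primrec.listFilterMap (list_range.comp (succ.comp snd))
  -- context: ((e,n),s) × k
  have hdec : Primrec fun w : ((ℕ × ℕ) × ℕ) × ℕ => Encodable.decode (α := BinStr) w.2 :=
    Primrec.decode.comp snd
  have h1 : Primrec₂ fun (w : ((ℕ × ℕ) × ℕ) × ℕ) (q : BinStr) =>
      if q.length ≤ w.1.1.2 then evaln (w.1.2+1) c (Nat.pair w.2 0) else none := by
    apply Primrec.ite
    · exact (PrimrecRel.comp nat_le (list_length.comp snd) (snd.comp (fst.comp (fst.comp fst))))
    · exact primrec_evaln.comp (((succ.comp (snd.comp (fst.comp fst))).pair (const c)).pair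
        (Primrec₂.natPair.comp (snd.comp fst) (const 0)))
    · exact const none
  have h2 : Primrec₂ fun (w : ((ℕ × ℕ) × ℕ) × ℕ) (m : ℕ) =>
      if m.unpair.1 = w.1.1.1 ∧
          (Encodable.decode (α := BinStr) m.unpair.2).map
            (fun y => Encodable.encode y) = some m.unpair.2
      then some m else none := by
    have u1 : Primrec fun w : (((ℕ × ℕ) × ℕ) × ℕ) × ℕ => w.2.unpair.1 :=
      fst.comp (Primrec.unpair.comp snd)
    have u2 : Primrec fun w : (((ℕ × ℕ) × ℕ) × ℕ) × ℕ => w.2.unpair.2 :=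
      snd.comp (Primrec.unpair.comp snd)
    apply Primrec.ite
    · apply PrimrecPred.and
      · exact PrimrecRel.comp Primrec.eq u1 (fst.comp (fst.comp (fst.comp fst)))
      · exact PrimrecRel.comp Primrec.eq
          (option_map (Primrec.decode.comp u2) ((Primrec.encode.comp snd).to₂))
          (option_some.comp u2)
    · exact option_some.comp snd
    · exact const none
  exact (option_bind (option_bind hdec h1) h2).to₂

open Primrec in
lemma ins_primrec : Primrec₂ ins := by
  have h : Primrec₂ (fun (L : List ℕ) (m : ℕ) =>
      if List.idxOf m L < L.length then L else L ++ [m]) :=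
    Primrec.ite (PrimrecRel.comp nat_lt (list_idxOf.comp snd fst) (list_length.comp fst))
      fst (list_concat.comp fst snd)
  refine Primrec₂.of_eq h fun L m => ?_
  simp [ins, List.idxOf_lt_length_iff]

open Primrec in
lemma E_primrec (c : Code) : Primrec fun x : (ℕ × ℕ) × ℕ => E c x.1.1 x.1.2 x.2 := by
  have hrange : Primrec fun x : (ℕ × ℕ) × ℕ => List.range (x.2 + 1) :=
    list_range.comp (succ.comp snd)
  have hg0 : Primrec fun p : ((ℕ × ℕ) × ℕ) × ℕ => step c p.1.1.1 p.1.1.2 p.2 :=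
    (step_primrec c).comp (((fst.comp (fst.comp fst)).pair (snd.comp (fst.comp fst))).pair snd)
  have hg : Primrec₂ fun (x : (ℕ × ℕ) × ℕ) (t : ℕ) => step c x.1.1 x.1.2 t := hg0.to₂
  have hcand : Primrec fun x : (ℕ × ℕ) × ℕ =>
      (List.range (x.2 + 1)).flatMap (fun t => step c x.1.1 x.1.2 t) :=
    list_flatMap hrange hg
  have hfold : Primrec₂ fun (_ : (ℕ × ℕ) × ℕ) (Lm : List ℕ × ℕ) => ins Lm.1 Lm.2 :=
    (ins_primrec.comp (fst.comp snd) (snd.comp snd)).to₂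
  exact list_foldl hcand (const []) hfold

open Primrec in
lemma f_primrec (c : Code) : Primrec fun w : (BinStr × ℕ) × ℕ => f c w.1.1 w.1.2 w.2 := by
  have hz : Primrec fun w : (BinStr × ℕ) × ℕ => ((w.1.2.unpair.1, w.1.2.unpair.2), w.2) :=
    ((fst.comp (Primrec.unpair.comp (snd.comp fst))).pair
      (snd.comp (Primrec.unpair.comp (snd.comp fst)))).pair snd
  have hE : Primrec fun w : (BinStr × ℕ) × ℕ => E c w.1.2.unpair.1 w.1.2.unpair.2 w.2 :=
    (E_primrec c).comp hz
  have hidx : Primrec fun w : (BinStr × ℕ) × ℕ => idx w.1.1 - 1 :=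
    Primrec.pred.comp (idx_primrec.comp (fst.comp fst))
  have hget : Primrec fun w : (BinStr × ℕ) × ℕ =>
      (E c w.1.2.unpair.1 w.1.2.unpair.2 w.2)[idx w.1.1 - 1]? :=
    list_getElem?.comp hE hidx
  exact option_map hget ((snd.comp (Primrec.unpair.comp snd)).to₂)

lemma V_partrec (c : Code) : Partrec₂ (V c) :=
  Partrec.rfindOpt ((f_primrec c).to_comp.to₂)


/-! ### arithmetic of `idx` -/

lemma foldl_base (p : BinStr) (i : ℕ) :
    p.foldl (fun n b => 2 * n + cond b 1 0) i
      = i * 2 ^ p.length + p.foldl (fun n b => 2 * n + cond b 1 0) 0 := by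
  induction p generalizing i with
  | nil => simp
  | cons b p ih =>
    simp only [List.foldl_cons, List.length_cons]
    rw [ih (2 * i + cond b 1 0), ih (2 * 0 + cond b 1 0)]
    ring

lemma val_lt (p : BinStr) : p.foldl (fun n b => 2 * n + cond b 1 0) 0 < 2 ^ p.length := by
  induction p with
  | nil => simp
  | cons b p ih =>
    simp only [List.foldl_cons, List.length_cons]
    rw [foldl_base]
    have hb : cond b 1 0 ≤ 1 := by cases b <;> simp
    have : (2 * 0 + cond b 1 0) * 2 ^ p.length ≤ 2 ^ p.length := by
      simpa using Nat.mul_le_mul_right (2 ^ p.length) (by simpa using hb)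
    have h2 : 2 ^ (p.length + 1) = 2 ^ p.length + 2 ^ p.length := by ring
    omega

lemma idx_eq (p : BinStr) :
    idx p = 2 ^ p.length + p.foldl (fun n b => 2 * n + cond b 1 0) 0 := by
  unfold idx; rw [foldl_base]; ring

lemma log_idx (p : BinStr) : Nat.log 2 (idx p) = p.length := by
  have h1 := val_lt p
  have h2 := idx_eq p
  refine Nat.log_eq_of_pow_le_of_lt_pow (by omega) ?_
  have : 2 ^ (p.length + 1) = 2 ^ p.length + 2 ^ p.length := by ring
  omega

/-- fixed-width binary expansion, most significant bit first -/
def toB : ℕ → ℕ → BinStr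
  | 0, _ => []
  | L + 1, v => toB L (v / 2) ++ [decide (v % 2 = 1)]

lemma toB_length (L v : ℕ) : (toB L v).length = L := by
  induction L generalizing v with
  | zero => rfl
  | succ L ih => simp [toB, ih]

lemma toB_val (L v : ℕ) (h : v < 2 ^ L) :
    (toB L v).foldl (fun n b => 2 * n + cond b 1 0) 0 = v := by
  induction L generalizing v with
  | zero => simp at h; simp [toB, h]
  | succ L ih =>
    have hv2 : v / 2 < 2 ^ L := by
      have : 2 ^ (L + 1) = 2 * 2 ^ L := by ring
      omega
    have hmod : (cond (decide (v % 2 = 1)) 1 0 : ℕ) = v % 2 := by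
      rcases Nat.mod_two_eq_zero_or_one v with h | h <;> simp [h]
    simp only [toB, List.foldl_append, List.foldl_cons, List.foldl_nil, ih _ hv2, hmod]
    omega

lemma exists_idx (i : ℕ) :
    ∃ p : BinStr, idx p = i + 1 ∧ p.length = Nat.log 2 (i + 1) := by
  set L := Nat.log 2 (i + 1) with hL
  have h1 : 2 ^ L ≤ i + 1 := Nat.pow_log_le_self 2 (Nat.succ_ne_zero i)
  have h2 : i + 1 < 2 ^ (L + 1) := Nat.lt_pow_succ_log_self (by norm_num) _
  have hlt : i + 1 - 2 ^ L < 2 ^ L := by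
    have : 2 ^ (L + 1) = 2 ^ L + 2 ^ L := by ring
    omega
  refine ⟨toB L (i + 1 - 2 ^ L), ?_, toB_length _ _⟩
  rw [idx_eq, toB_length, toB_val _ _ hlt]
  omega

/-! ### `ins` and `foldl ins` -/

lemma ins_prefix (L : List ℕ) (m : ℕ) : L <+: ins L m := by
  unfold ins; split
  · exact List.prefix_rfl
  · exact ⟨[m], rfl⟩

lemma foldl_ins_prefix_init (l : List ℕ) (A : List ℕ) : A <+: l.foldl ins A := by
  induction l generalizing A with
  | nil => exact List.prefix_rfl
  | cons b l ih => exact (ins_prefix A b).trans (ih (ins A b))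

lemma mem_foldl_ins_of_mem {l : List ℕ} {x : ℕ} (h : x ∈ l) (A : List ℕ) :
    x ∈ l.foldl ins A := by
  induction l generalizing A with
  | nil => cases h
  | cons b l ih =>
    rcases List.mem_cons.1 h with rfl | h
    · have hx : x ∈ ins A x := by unfold ins; split <;> simp_all
      exact (foldl_ins_prefix_init l (ins A x)).subset hx
    · exact ih h _

lemma mem_foldl_ins {l A : List ℕ} {x : ℕ} (h : x ∈ l.foldl ins A) : x ∈ A ∨ x ∈ l := by
  induction l generalizing A with
  | nil => exact Or.inl h
  | cons b l ih =>
    rcases ih h with h' | h'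
    · unfold ins at h'; split at h'
      · exact Or.inl h'
      · rcases List.mem_append.1 h' with h'' | h''
        · exact Or.inl h''
        · simp at h''; subst h''; exact Or.inr List.mem_cons_self
    · exact Or.inr (List.mem_cons_of_mem _ h')

lemma nodup_foldl_ins (l : List ℕ) {A : List ℕ} (hA : A.Nodup) : (l.foldl ins A).Nodup := by
  induction l generalizing A with
  | nil => exact hA
  | cons b l ih =>
    refine ih ?_
    unfold ins; split
    · exact hA
    · simp [List.nodup_append, hA]; intro hb; grind

lemma get?_mono_of_prefix {l₁ l₂ : List ℕ} (h : l₁ <+: l₂) {i : ℕ} {x : ℕ}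
    (hx : l₁[i]? = some x) : l₂[i]? = some x := by
  obtain ⟨t, rfl⟩ := h
  have hi : i < l₁.length := by
    by_contra hc
    rw [List.getElem?_eq_none_iff.2 (le_of_not_gt hc)] at hx
    cases hx
  rw [List.getElem?_append_left hi]; exact hx

/-! ### properties of `E` -/

lemma E_prefix (c : Code) (e n : ℕ) {s t : ℕ} (h : s ≤ t) : E c e n s <+: E c e n t := by
  obtain ⟨k, rfl⟩ := Nat.exists_eq_add_of_le h
  unfold E
  conv_rhs => rw [show s + k + 1 = (s + 1) + k by omega, List.range_add, List.flatMap_append,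
    List.foldl_append]
  exact foldl_ins_prefix_init _ _

lemma E_nodup (c : Code) (e n s : ℕ) : (E c e n s).Nodup :=
  nodup_foldl_ins _ List.nodup_nil

lemma mem_E_sound {c : Code} {e n s x : ℕ} (h : x ∈ E c e n s) :
    ∃ t, x ∈ step c e n t := by
  rcases mem_foldl_ins h with h' | h'
  · cases h'
  · rcases List.mem_flatMap.1 h' with ⟨t, _, ht⟩
    exact ⟨t, ht⟩

lemma mem_E_complete {c : Code} {e n t x : ℕ} (h : x ∈ step c e n t) :
    x ∈ E c e n t := by
  apply mem_foldl_ins_of_mem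
  exact List.mem_flatMap.2 ⟨t, List.mem_range.2 (Nat.lt_succ_self t), h⟩

/-! ### properties of `step` -/

lemma step_sound {c : Code} {e n s m : ℕ} (h : m ∈ step c e n s) :
    m.unpair.1 = e ∧ (∃ y : BinStr, Encodable.encode y = m.unpair.2) ∧
      ∃ (k : ℕ) (q : BinStr), Encodable.decode (α := BinStr) k = some q ∧
        q.length ≤ n ∧ m ∈ eval c (Nat.pair k 0) := by
  rcases List.mem_filterMap.1 h with ⟨k, _, hk⟩
  rcases hdq : Encodable.decode (α := BinStr) k with - | q
  · rw [hdq] at hk; simp at hk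
  · rw [hdq] at hk
    simp only [Option.bind_some] at hk
    split at hk
    case isFalse => simp at hk
    case isTrue hqn =>
      rcases Option.bind_eq_some_iff.1 hk with ⟨m', hev, hm⟩
      split at hm
      case isFalse => simp at hm
      case isTrue hcond =>
        obtain rfl : m' = m := by injection hm
        rcases hcond with ⟨he, hchk⟩
        rcases Option.map_eq_some_iff.1 hchk with ⟨y, _, hy⟩
        exact ⟨he, ⟨y, hy⟩, k, q, hdq, hqn, evaln_sound hev⟩

lemma step_complete {c : Code} {e n m k s0 : ℕ} {q : BinStr}
    (hdk : Encodable.decode (α := BinStr) k = some q) (hlen : q.length ≤ n)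
    (hev : m ∈ evaln s0 c (Nat.pair k 0)) (h1 : m.unpair.1 = e)
    (h2 : (Encodable.decode (α := BinStr) m.unpair.2).map
      (fun y => Encodable.encode y) = some m.unpair.2) :
    m ∈ step c e n (max k s0) := by
  have hev' : m ∈ evaln (max k s0 + 1) c (Nat.pair k 0) :=
    evaln_mono (le_trans (le_max_right k s0) (Nat.le_succ _)) hev
  refine List.mem_filterMap.2 ⟨k, List.mem_range.2 (by omega), ?_⟩
  rw [hdk]
  simp only [Option.bind_some, if_pos hlen]
  rw [show evaln (max k s0 + 1) c (Nat.pair k 0) = some m from hev']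
  simp only [Option.bind_some]
  rw [if_pos ⟨h1, h2⟩]


lemma f_mono (c : Code) (p : BinStr) (z : ℕ) {u v : ℕ} (h : u ≤ v) {x : ℕ}
    (hx : x ∈ f c p z u) : x ∈ f c p z v := by
  unfold f at hx ⊢
  rw [Option.mem_def] at hx ⊢
  rcases Option.map_eq_some_iff.1 hx with ⟨m, hm, rfl⟩
  rw [get?_mono_of_prefix (E_prefix c _ _ h) hm]
  rfl

end KV

open Nat.Partrec.Code in
/-- If `C(a,b) ≤ n` then `C(b | a, n) ≤ log₂ N_a + c`,
where `N_a = #{y : C(a,y) ≤ n}`. -/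
theorem plain_bound_via_count (U : Machine) (hU : IsOptimal U) :
    ∃ c : ℕ, ∀ (a b : BinStr) (n : ℕ),
      cplx0 U (Nat.pair (enc a) (enc b)) ≤ n →
      cplx U (enc b) (Nat.pair (enc a) n) ≤
        Nat.log 2 (Set.ncard {y : BinStr | cplx0 U (Nat.pair (enc a) (enc y)) ≤ n}) + c := by
  classical
  obtain ⟨hUc, hUopt⟩ := hU
  -- every natural number is an output of `U` under the trivial condition
  have hWcomp : Computable fun x : BinStr × ℕ => KV.idx x.1 - 1 :=
    (Primrec.pred.comp (KV.idx_primrec.comp Primrec.fst)).to_comp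
  have hW : Partrec₂ (fun (p : BinStr) (_ : ℕ) => (Part.some (KV.idx p - 1) : Part ℕ)) :=
    hWcomp.partrec
  obtain ⟨cW, hcW⟩ := hUopt _ hW
  have hall : ∀ x : ℕ, ∃ q : BinStr, x ∈ U q 0 := by
    intro x
    obtain ⟨p, hp, -⟩ := KV.exists_idx x
    obtain ⟨q, -, hq⟩ := hcW p 0 x (Part.mem_some_iff.2 (by omega))
    exact ⟨q, hq⟩
  have hle : ∀ (x z : ℕ) (p : BinStr), x ∈ U p z → cplx U x z ≤ p.length := by
    intro x z p h
    exact Nat.sInf_le ⟨p, rfl, h⟩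
  have hmin : ∀ x : ℕ, ∃ p : BinStr, p.length = cplx0 U x ∧ x ∈ U p 0 := by
    intro x
    obtain ⟨q, hq⟩ := hall x
    have hne : {l : ℕ | ∃ p : BinStr, p.length = l ∧ x ∈ U p 0}.Nonempty :=
      ⟨q.length, q, rfl, hq⟩
    exact Nat.sInf_mem hne
  -- a code computing `U`
  obtain ⟨cd, hcd⟩ := Nat.Partrec.Code.exists_code.1 hUc
  have hEval : ∀ (k : ℕ) (q : BinStr) (m : ℕ), Encodable.decode (α := BinStr) k = some q →
      (m ∈ eval cd (Nat.pair k 0) ↔ m ∈ U q 0) := by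
    intro k q m hdk
    rw [hcd]
    simp [Encodable.decode_prod_val, hdk, Part.mem_bind_iff, Part.mem_map_iff]
  obtain ⟨d, hd⟩ := hUopt (KV.V cd) (KV.V_partrec cd)
  refine ⟨d, fun a b n hn => ?_⟩
  obtain ⟨p0, hp0len, hp0⟩ := hmin (Nat.pair (enc a) (enc b))
  have hp0n : p0.length ≤ n := le_trans (le_of_eq hp0len) hn
  have hev : Nat.pair (enc a) (enc b) ∈ eval cd (Nat.pair (Encodable.encode p0) 0) :=
    (hEval _ _ _ (Encodable.encodek p0)).2 hp0
  obtain ⟨s0, hs0⟩ := evaln_complete.1 hev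
  have hchk : (Encodable.decode (α := BinStr) (Nat.pair (enc a) (enc b)).unpair.2).map
      (fun y => Encodable.encode y) = some (Nat.pair (enc a) (enc b)).unpair.2 := by
    simp [Nat.unpair_pair, enc, Encodable.encodek]
  have hstep := KV.step_complete (e := enc a) (Encodable.encodek p0) hp0n hs0 (by simp) hchk
  set s := max (Encodable.encode p0) s0 with hs
  have hmE : Nat.pair (enc a) (enc b) ∈ KV.E cd (enc a) n s := KV.mem_E_complete hstep
  set EL := KV.E cd (enc a) n s with hEL
  set i := List.idxOf (Nat.pair (enc a) (enc b)) EL with hi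
  have hget : EL[i]? = some (Nat.pair (enc a) (enc b)) := List.getElem?_idxOf hmE
  have hilt : i < EL.length := List.idxOf_lt_length_iff.2 hmE
  -- every element of `EL` belongs to the image of the counted set
  have hsub : ∀ x ∈ EL, x ∈ (fun y : BinStr => Nat.pair (enc a) (enc y)) ''
      {y : BinStr | cplx0 U (Nat.pair (enc a) (enc y)) ≤ n} := by
    intro x hx
    obtain ⟨t, hxt⟩ := KV.mem_E_sound hx
    obtain ⟨hx1, ⟨y, hy⟩, k, q, hdk, hqn, hxe⟩ := KV.step_sound hxt
    have hxU : x ∈ U q 0 := (hEval k q x hdk).1 hxe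
    have hxc : cplx0 U x ≤ n := le_trans (hle x 0 q hxU) hqn
    have hxeq : x = Nat.pair (enc a) (enc y) := by
      conv_lhs => rw [← Nat.pair_unpair x]
      rw [hx1, ← hy]
      rfl
    refine ⟨y, ?_, hxeq.symm⟩
    show cplx0 U (Nat.pair (enc a) (enc y)) ≤ n
    rw [← hxeq]
    exact hxc
  have hginj : Function.Injective fun y : BinStr => Nat.pair (enc a) (enc y) := by
    intro y y' h
    have h2 := congrArg (fun t => t.unpair.2) h
    simp only [Nat.unpair_pair] at h2
    exact Encodable.encode_injective h2
  have hSfin : {y : BinStr | cplx0 U (Nat.pair (enc a) (enc y)) ≤ n}.Finite := by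
    choose F hF1 hF2 using fun y : BinStr => hmin (Nat.pair (enc a) (enc y))
    apply Set.Finite.of_finite_image (f := F)
    · apply Set.Finite.subset (List.finite_length_le Bool n)
      rintro p ⟨y, hy, rfl⟩
      exact le_trans (le_of_eq (hF1 y)) hy
    · intro y hy y' hy' hFe
      have hu : Nat.pair (enc a) (enc y) = Nat.pair (enc a) (enc y') :=
        Part.mem_unique (hF2 y) (hFe ▸ hF2 y')
      exact hginj hu
  have hTfin := hSfin.image (fun y : BinStr => Nat.pair (enc a) (enc y))
  have hlenle : EL.length ≤
      Set.ncard {y : BinStr | cplx0 U (Nat.pair (enc a) (enc y)) ≤ n} := by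
    have hnodup : EL.Nodup := KV.E_nodup _ _ _ _
    rw [← List.toFinset_card_of_nodup hnodup,
      ← Set.ncard_image_of_injective _ hginj,
      Set.ncard_eq_toFinset_card _ hTfin]
    apply Finset.card_le_card
    intro x hx
    rw [Set.Finite.mem_toFinset]
    exact hsub x (List.mem_toFinset.1 hx)
  obtain ⟨p1, hp1idx, hp1len⟩ := KV.exists_idx i
  have hfi : KV.f cd p1 (Nat.pair (enc a) n) s = some (enc b) := by
    unfold KV.f
    rw [hp1idx]
    simp only [Nat.unpair_pair, Nat.add_sub_cancel, ← hEL, hget, Option.map_some]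
  have hVb : enc b ∈ KV.V cd p1 (Nat.pair (enc a) n) := by
    refine (Nat.rfindOpt_mono ?_).2 ⟨s, by rw [hfi]; rfl⟩
    intro x u v huv hxu
    exact KV.f_mono cd p1 _ huv hxu
  obtain ⟨q1, hq1len, hq1⟩ := hd p1 (Nat.pair (enc a) n) (enc b) hVb
  have hfin1 : cplx U (enc b) (Nat.pair (enc a) n) ≤ q1.length := hle _ _ _ hq1
  have hiN : i + 1 ≤ Set.ncard {y : BinStr | cplx0 U (Nat.pair (enc a) (enc y)) ≤ n} := by
    omega
  have hlog : p1.length ≤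
      Nat.log 2 (Set.ncard {y : BinStr | cplx0 U (Nat.pair (enc a) (enc y)) ≤ n}) := by
    rw [hp1len]
    exact Nat.log_mono_right hiN
  omega
end

section
/- There exists a constant c such that for every binary string a: |C(a) − K(a | C(a))| ≤ c. That is, C(a) = K(a|C(a)) + O(1). -/
/-! Auxiliary machines -/

/-- Machine for direction 1: halts only on programs of length exactly the condition. -/
def KW1 (U : Machine) : Machine := fun p y =>
  bif p.length == y then U p 0 else Part.none

lemma KW1_partrec {U : Machine} (hU : Partrec₂ U) : Partrec₂ (KW1 U) := by
  have hc : Computable fun x : BinStr × ℕ => x.1.length == x.2 :=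
    (Primrec.beq.comp (Primrec.list_length.comp Primrec.fst) Primrec.snd).to_comp
  have hf : Partrec fun x : BinStr × ℕ => U x.1 0 :=
    hU.comp Computable.fst (Computable.const 0)
  exact Partrec.cond hc hf Partrec.none

lemma KW1_prefixFree (U : Machine) : PrefixFreeMachine (KW1 U) := by
  intro y p q hpq hp hq
  have hp' : p.length = y := by
    by_contra h
    simp [KW1, Bool.cond_eq_if, beq_iff_eq, h] at hp
  have hq' : q.length = y := by
    by_contra h
    simp [KW1, Bool.cond_eq_if, beq_iff_eq, h] at hq
  exact List.IsPrefix.eq_of_length hpq (hp'.trans hq'.symm)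

lemma tail_iterate_eq_drop : ∀ (n : ℕ) (l : BinStr), List.tail^[n] l = l.drop n := by
  intro n
  induction n with
  | zero => simp
  | succ n ih =>
    intro l
    rw [Function.iterate_succ_apply, ih]
    cases l <;> simp

/-- Parse `true^k ++ false :: true^d ++ false :: q` into `(q, length + k)`. -/
def KParse (p : BinStr) : Option (BinStr × ℕ) :=
  let k := p.findIdx (fun b => !b)
  let r := List.tail^[k + 1] p
  let d := r.findIdx (fun b => !b)
  let q := List.tail^[d + 1] r
  if k < p.length ∧ d < r.length then some (q, p.length + k) else none

lemma KParse_computable : Computable KParse := by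
  have hnotb : Primrec₂ fun (_ : BinStr) (b : Bool) => !b :=
    (Primrec.not.comp Primrec.snd).to₂
  have hk : Primrec fun p : BinStr => p.findIdx (fun b => !b) :=
    Primrec.list_findIdx Primrec.id hnotb
  have htail : Primrec₂ fun (_ : BinStr) (l : BinStr) => l.tail :=
    (Primrec.list_tail.comp Primrec.snd).to₂
  have hr : Primrec fun p : BinStr => List.tail^[p.findIdx (fun b => !b) + 1] p :=
    Primrec.nat_iterate (Primrec.succ.comp hk) Primrec.id htail
  have hnotb' : Primrec₂ fun (_ : BinStr) (b : Bool) => !b :=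
    (Primrec.not.comp Primrec.snd).to₂
  have hd : Primrec fun p : BinStr =>
      (List.tail^[p.findIdx (fun b => !b) + 1] p).findIdx (fun b => !b) :=
    Primrec.list_findIdx hr hnotb'
  have hq : Primrec fun p : BinStr =>
      List.tail^[(List.tail^[p.findIdx (fun b => !b) + 1] p).findIdx (fun b => !b) + 1]
        (List.tail^[p.findIdx (fun b => !b) + 1] p) :=
    Primrec.nat_iterate (Primrec.succ.comp hd) hr htail
  have hval : Primrec fun p : BinStr =>
      (some (List.tail^[(List.tail^[p.findIdx (fun b => !b) + 1] p).findIdx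
          (fun b => !b) + 1] (List.tail^[p.findIdx (fun b => !b) + 1] p),
        p.length + p.findIdx (fun b => !b)) : Option (BinStr × ℕ)) :=
    Primrec.option_some.comp (hq.pair (Primrec.nat_add.comp Primrec.list_length hk))
  have hcond : PrimrecPred fun p : BinStr =>
      p.findIdx (fun b => !b) < p.length ∧
        (List.tail^[p.findIdx (fun b => !b) + 1] p).findIdx (fun b => !b) <
          (List.tail^[p.findIdx (fun b => !b) + 1] p).length := by
    exact PrimrecPred.and (Primrec.nat_lt.comp hk Primrec.list_length)
      (Primrec.nat_lt.comp hd (Primrec.list_length.comp hr))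
  exact (Primrec.ite hcond hval (Primrec.const none)).to_comp

/-- Machine for direction 2. -/
def KW2 (V : Machine) : Machine := fun p _ =>
  (Part.ofOption (KParse p)).bind fun z => V z.1 z.2

lemma KW2_partrec {V : Machine} (hV : Partrec₂ V) : Partrec₂ (KW2 V) := by
  have h1 : Partrec fun x : BinStr × ℕ => Part.ofOption (KParse x.1) :=
    Computable.ofOption (KParse_computable.comp Computable.fst)
  exact h1.bind <| hV.comp (Computable.fst.comp Computable.snd)
    (Computable.snd.comp Computable.snd)

lemma replicate_findIdx (k : ℕ) (r : BinStr) :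
    (List.replicate k true ++ false :: r).findIdx (fun b => !b) = k := by
  induction k with
  | zero => simp [List.findIdx_cons]
  | succ k ih => simpa [List.replicate_succ, List.findIdx_cons] using ih

lemma replicate_drop (k : ℕ) (r : BinStr) :
    (List.replicate k true ++ false :: r).drop (k + 1) = r := by
  have : List.replicate k true ++ false :: r
      = (List.replicate k true ++ [false]) ++ r := by simp
  rw [this]
  have hl : (List.replicate k true ++ [false]).length = k + 1 := by simp
  rw [← hl, List.drop_left]

lemma KParse_spec (k d : ℕ) (q : BinStr) :
    KParse (List.replicate k true ++ false :: (List.replicate d true ++ false :: q))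
      = some (q, (k + 1 + (d + 1) + q.length) + k) := by
  set r : BinStr := List.replicate d true ++ false :: q with hr
  have h1 : (List.replicate k true ++ false :: r).findIdx (fun b => !b) = k :=
    replicate_findIdx k r
  have h2 : List.tail^[k + 1] (List.replicate k true ++ false :: r) = r := by
    rw [tail_iterate_eq_drop, replicate_drop]
  have h3 : r.findIdx (fun b => !b) = d := replicate_findIdx d q
  have h4 : List.tail^[d + 1] r = q := by
    rw [tail_iterate_eq_drop, hr, replicate_drop]
  have hlen : (List.replicate k true ++ false :: r).length = k + 1 + (d + 1) + q.length := by
    simp [hr]; omega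
  have hrlen : r.length = d + 1 + q.length := by simp [hr]; omega
  simp only [KParse, h1, h2, h3, h4, hlen, hrlen]
  rw [if_pos (by omega)]


/-- `C(a) = K(a | C(a)) + O(1)`. -/
theorem plain_eq_prefix_given_plain (U V : Machine) (hU : IsOptimal U) (hV : IsPrefixOptimal V) :
    ∃ c : ℕ, ∀ a : BinStr,
      |(cplx0 U (enc a) : ℤ) - (cplx V (enc a) (cplx0 U (enc a)) : ℤ)| ≤ (c : ℤ) := by
  -- constant for direction 1
  obtain ⟨c0, hc0⟩ := hV.2.2 (KW1 U) (KW1_partrec hU.1) (KW1_prefixFree U)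
  -- constant for direction 2
  obtain ⟨c1, hc1⟩ := hU.2 (KW2 V) (KW2_partrec hV.1)
  -- constant to show every string has some U-program
  have henc2 : Computable₂ fun (p : BinStr) (_ : ℕ) => enc p :=
    (Computable.encode.comp Computable.fst).to₂
  obtain ⟨c2, hc2⟩ := hU.2 (fun p _ => Part.some (enc p)) henc2.partrec₂
  refine ⟨c0 + 2 * c1 + 3, fun a => ?_⟩
  set Ca := cplx0 U (enc a) with hCa
  set Ka := cplx V (enc a) Ca with hKa
  -- the set for plain complexity is nonempty
  have hSne : {n | ∃ p : BinStr, p.length = n ∧ enc a ∈ U p 0}.Nonempty := by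
    obtain ⟨q, _, hq2⟩ := hc2 a 0 (enc a) (Part.mem_some _)
    exact ⟨q.length, q, rfl, hq2⟩
  obtain ⟨p, hp_len, hp⟩ := Nat.sInf_mem hSne
  have hp_len' : p.length = Ca := hp_len
  -- direction 1 : Ka ≤ Ca + c0
  have hW1 : enc a ∈ KW1 U p Ca := by
    simp [KW1, hp_len']
    exact hp
  obtain ⟨q, hq_len, hq⟩ := hc0 p Ca (enc a) hW1
  have hdir1 : Ka ≤ Ca + c0 := by
    have : Ka ≤ q.length := Nat.sInf_le ⟨q, rfl, hq⟩
    omega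
  -- the set for prefix complexity is nonempty, take minimal witness
  have hTne : {n | ∃ q : BinStr, q.length = n ∧ enc a ∈ V q Ca}.Nonempty :=
    ⟨q.length, q, rfl, hq⟩
  obtain ⟨qm, hqm_len, hqm⟩ := Nat.sInf_mem hTne
  have hqm_len' : qm.length = Ka := hqm_len
  -- direction 2 : Ca ≤ Ka + 2*c1 + 3
  have hdir2 : Ca < Ka + 2 * (c1 + 1) + 2 := by
    by_contra hcon
    push_neg at hcon
    set k := c1 + 1 with hk
    set d := Ca - (Ka + 2 * k + 2) with hd
    set p2 : BinStr :=
      List.replicate k true ++ false :: (List.replicate d true ++ false :: qm) with hp2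
    have hp2_len : p2.length = k + 1 + (d + 1) + qm.length := by
      simp [hp2]; omega
    have hp2_cond : p2.length + k = Ca := by
      rw [hp2_len, hqm_len']
      omega
    have hparse : KParse p2 = some (qm, Ca) := by
      rw [hp2, KParse_spec]
      rw [← hp2_cond, hp2_len]
    have hmem : enc a ∈ KW2 V p2 0 := by
      refine Part.mem_bind_iff.2 ⟨(qm, Ca), ?_, hqm⟩
      rw [hparse]
      exact Part.mem_ofOption.2 rfl
    obtain ⟨q', hq'_len, hq'⟩ := hc1 p2 0 (enc a) hmem
    have hCa_le : Ca ≤ q'.length := Nat.sInf_le ⟨q', rfl, hq'⟩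
    omega
  have habs : |(Ca : ℤ) - (Ka : ℤ)| ≤ ((c0 + 2 * c1 + 3 : ℕ) : ℤ) := by
    rw [abs_le]
    constructor <;> push_cast <;> omega
  exact habs
end

section
/- There exists a constant c such that for every binary string b: |C(b) − C(b | C(b))| ≤ c. That is, C(b) = C(b|C(b)) + O(1). -/
/- ### Auxiliary material -/

namespace PlainAux

open Primrec

theorem primrec_drop : Primrec₂ (fun (l : BinStr) (n : ℕ) => l.drop n) := by
  have h : Primrec₂ (fun (l : BinStr) (n : ℕ) =>
      Nat.rec l (fun _ ih => ih.tail) n : BinStr → ℕ → BinStr) := by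
    exact Primrec.to₂ <| Primrec.nat_rec' Primrec.snd Primrec.fst
      (Primrec.list_tail.comp <| Primrec.snd.comp Primrec.snd).to₂
  refine h.of_eq ?_
  intro l n
  induction n with
  | zero => simp
  | succ n ih => simpa [ih] using (List.tail_drop l n).symm

/-- rest after the first `false`. -/
def rest1 (q : BinStr) : BinStr := q.drop (q.idxOf false + 1)

/-- the program part. -/
def prog (q : BinStr) : BinStr := (rest1 q).drop ((rest1 q).idxOf false + 1)

/-- the decoded number. -/
def dVal (q : BinStr) : ℕ := q.idxOf false * q.idxOf false + (rest1 q).idxOf false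

theorem primrec_rest1 : Primrec rest1 :=
  primrec_drop.comp Primrec.id
    (Primrec.succ.comp (Primrec.list_idxOf.comp (Primrec.const false) Primrec.id))

theorem primrec_prog : Primrec prog :=
  primrec_drop.comp primrec_rest1
    (Primrec.succ.comp (Primrec.list_idxOf.comp (Primrec.const false) primrec_rest1))

theorem primrec_dVal : Primrec dVal :=
  Primrec.nat_add.comp
    (Primrec.nat_mul.comp
      (Primrec.list_idxOf.comp (Primrec.const false) Primrec.id)
      (Primrec.list_idxOf.comp (Primrec.const false) Primrec.id))
    (Primrec.list_idxOf.comp (Primrec.const false) primrec_rest1)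

theorem indexOf_replicate_append (s : ℕ) (t : BinStr) :
    (List.replicate s true ++ false :: t).idxOf false = s := by
  induction s with
  | zero => simp [List.idxOf, List.findIdx_cons]
  | succ s ih => simpa [List.replicate_succ, List.idxOf_cons] using ih

theorem drop_replicate_append (s : ℕ) (t : BinStr) :
    (List.replicate s true ++ false :: t).drop (s + 1) = t := by
  induction s with
  | zero => simp
  | succ s ih => simp [List.replicate_succ, ih]

/-- The code for a pair `(d, p)` with `d = s*s + r`. -/
def code (s r : ℕ) (p : BinStr) : BinStr :=
  List.replicate s true ++ false :: (List.replicate r true ++ false :: p)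

theorem rest1_eq (s : ℕ) (t : BinStr) :
    rest1 (List.replicate s true ++ false :: t) = t := by
  unfold rest1
  rw [indexOf_replicate_append, drop_replicate_append]

theorem prog_code (s r : ℕ) (p : BinStr) : prog (code s r p) = p := by
  unfold code prog
  rw [rest1_eq, indexOf_replicate_append, drop_replicate_append]

theorem dVal_code (s r : ℕ) (p : BinStr) : dVal (code s r p) = s * s + r := by
  unfold code dVal
  rw [rest1_eq, indexOf_replicate_append, indexOf_replicate_append]

theorem code_length (s r : ℕ) (p : BinStr) :
    (code s r p).length = s + r + 2 + p.length := by
  simp [code]; omega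

/-- existence of some program for `enc b` under any condition. -/
theorem cplx_set_nonempty (U : Machine) (hU : IsOptimal U) :
    ∃ c0 : ℕ, ∀ (b : BinStr) (y : ℕ),
      {n | ∃ p : BinStr, p.length = n ∧ enc b ∈ U p y}.Nonempty := by
  have hV : Partrec₂ (fun (p : BinStr) (_ : ℕ) => (Part.some (enc p) : Part ℕ)) := by
    have : Computable (fun pr : BinStr × ℕ => enc pr.1) :=
      Computable.encode.comp Computable.fst
    exact this.partrec
  obtain ⟨c0, hc0⟩ := hU.2 _ hV
  refine ⟨c0, fun b y => ?_⟩
  obtain ⟨q, _, hq⟩ := hc0 b y (enc b) (by simp)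
  exact ⟨q.length, q, rfl, hq⟩

theorem cplx_le {U : Machine} {x y : ℕ} {p : BinStr} (h : x ∈ U p y) :
    cplx U x y ≤ p.length :=
  Nat.sInf_le ⟨p, rfl, h⟩

theorem cplx_witness {U : Machine} {x y : ℕ}
    (h : {n | ∃ p : BinStr, p.length = n ∧ x ∈ U p y}.Nonempty) :
    ∃ p : BinStr, p.length = cplx U x y ∧ x ∈ U p y :=
  Nat.sInf_mem h

end PlainAux

open PlainAux in
/-- `C(b) = C(b | C(b)) + O(1)`. -/
theorem plain_eq_plain_given_plain (U : Machine) (hU : IsOptimal U) :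
    ∃ c : ℕ, ∀ b : BinStr,
      |(cplx0 U (enc b) : ℤ) - (cplx U (enc b) (cplx0 U (enc b)) : ℤ)| ≤ (c : ℤ) := by
  obtain ⟨_c0, hne⟩ := cplx_set_nonempty U hU
  -- machine for the easy direction
  have hV1 : Partrec₂ (fun (p : BinStr) (_ : ℕ) => U p 0) :=
    (hU.1.comp₂ (Primrec.fst.to_comp.to₂) (Primrec₂.const 0).to_comp)
  obtain ⟨c1, hc1⟩ := hU.2 _ hV1
  -- machine for the hard direction
  have hV2 : Partrec₂ (fun (q : BinStr) (_ : ℕ) => U (prog q) ((prog q).length + dVal q)) := by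
    refine hU.1.comp₂ ?_ ?_
    · exact (primrec_prog.comp Primrec.fst).to_comp.to₂
    · exact ((Primrec.nat_add.comp (Primrec.list_length.comp (primrec_prog.comp Primrec.fst))
        (primrec_dVal.comp Primrec.fst))).to_comp.to₂
  obtain ⟨c2, hc2⟩ := hU.2 _ hV2
  refine ⟨max c1 ((c2 + 4) * (c2 + 4)), fun b => ?_⟩
  set C := max c1 ((c2 + 4) * (c2 + 4)) with hC
  set k := cplx0 U (enc b) with hk
  set m := cplx U (enc b) k with hm
  have e0 : k = cplx U (enc b) 0 := hk
  -- direction 1 : m ≤ k + c1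
  obtain ⟨p0, hp0len, hp0⟩ := cplx_witness (hne b 0)
  obtain ⟨q1, hq1len, hq1⟩ := hc1 p0 k (enc b) hp0
  have hd1 : m ≤ k + c1 := by
    have h1 : cplx U (enc b) k ≤ q1.length := cplx_le hq1
    omega
  -- direction 2 : k ≤ m + (c2+4)*(c2+4)
  have hd2 : k ≤ m + (c2 + 4) * (c2 + 4) := by
    rcases le_or_gt k m with h | h
    · omega
    · -- k > m
      obtain ⟨p, hplen, hp⟩ := cplx_witness (hne b k)
      set d := k - m with hd
      set s := Nat.sqrt d with hs
      set r := d - s * s with hr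
      have hsle : s * s ≤ d := Nat.sqrt_le d
      have hdsr : d = s * s + r := by omega
      have hcode : enc b ∈ (fun (q : BinStr) (_ : ℕ) =>
          U (prog q) ((prog q).length + dVal q)) (code s r p) 0 := by
        have hmk : p.length + (s * s + r) = k := by omega
        simpa [prog_code, dVal_code, hmk] using hp
      obtain ⟨q2, hq2len, hq2⟩ := hc2 (code s r p) 0 (enc b) hcode
      have hkq : cplx U (enc b) 0 ≤ q2.length := cplx_le hq2
      rw [code_length] at hq2len
      have hds : s * s + r ≤ s + r + 2 + c2 := by omega
      have hsb : s ≤ c2 + 3 := by nlinarith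
      have hdb : d < (s + 1) * (s + 1) := Nat.lt_succ_sqrt d
      have hdC : d ≤ (c2 + 4) * (c2 + 4) := by nlinarith
      omega
  have hub : k ≤ m + C := le_trans hd2 (by have := le_max_right c1 ((c2+4)*(c2+4)); omega)
  have hlb : m ≤ k + C := le_trans hd1 (by have := le_max_left c1 ((c2+4)*(c2+4)); omega)
  rw [abs_le]
  constructor <;> omega
end

section
/- There exists a constant c such that for every binary string u: |C(u | C(u)) − K(u | C(u))| ≤ c. That is, C(u|C(u)) = K(u|C(u)) + O(1). -/
/-- Decode a half-unary block: `replicate k true ++ false :: rest ↦ (k, rest)`. -/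
def goAux : List Bool → Option (ℕ × List Bool)
  | [] => none
  | b :: t => cond b ((goAux t).map fun s => (s.1 + 1, s.2)) (some (0, t))

@[simp] lemma goAux_nil : goAux [] = none := rfl
@[simp] lemma goAux_false (t : List Bool) : goAux (false :: t) = some (0, t) := rfl
@[simp] lemma goAux_true (t : List Bool) :
    goAux (true :: t) = (goAux t).map (fun s => (s.1 + 1, s.2)) := rfl

lemma goAux_replicate (k : ℕ) (rest : List Bool) :
    goAux (List.replicate k true ++ false :: rest) = some (k, rest) := by
  induction k with
  | zero => simp
  | succ k ih => simp [List.replicate_succ, ih]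

lemma goAux_eq_some {p : List Bool} {k : ℕ} {rest : List Bool}
    (h : goAux p = some (k, rest)) : p = List.replicate k true ++ false :: rest := by
  induction p generalizing k with
  | nil => simp at h
  | cons b t ih =>
    cases b with
    | false =>
      simp at h
      simp [h.1.symm, h.2]
    | true =>
      rw [goAux_true, Option.map_eq_some_iff] at h
      obtain ⟨⟨k', r'⟩, hg, he⟩ := h
      simp only [Prod.mk.injEq] at he
      obtain ⟨hk, hr⟩ := he
      subst hk; subst hr
      simp [List.replicate_succ, ih hg]

lemma goAux_primrec : Primrec goAux := by
  have h := Primrec.list_rec (Primrec.id (α := List Bool))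
    (Primrec.const (none : Option (ℕ × List Bool)))
    (h := fun (_ : List Bool) (s : Bool × List Bool × Option (ℕ × List Bool)) =>
      cond s.1 (s.2.2.map (fun t => (t.1 + 1, t.2))) (some (0, s.2.1)))
    (Primrec.cond (Primrec.fst.comp Primrec.snd)
      (Primrec.option_map (Primrec.snd.comp (Primrec.snd.comp Primrec.snd))
        ((((Primrec.succ.comp Primrec.fst).pair Primrec.snd).comp Primrec.snd).to₂))
      (Primrec.option_some.comp ((Primrec.const 0).pair
        (Primrec.fst.comp (Primrec.snd.comp Primrec.snd)))) |>.to₂)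
  refine h.of_eq fun l => ?_
  induction l with
  | nil => rfl
  | cons b t ih => cases b <;> simp [goAux, ← ih]


def preM (U : Machine) (g : BinStr → ℕ → Option (BinStr × ℕ)) : Machine :=
  fun p y => (Part.ofOption (g p y)).bind fun w => U w.1 w.2

lemma preM_partrec {U : Machine} (hU : Partrec₂ U)
    {g : BinStr → ℕ → Option (BinStr × ℕ)} (hg : Computable₂ g) :
    Partrec₂ (preM U g) := by
  have h1 : Partrec fun a : BinStr × ℕ => (Part.ofOption (g a.1 a.2)) :=
    Computable.ofOption hg
  have h2 : Partrec₂ fun (_ : BinStr × ℕ) (w : BinStr × ℕ) => U w.1 w.2 :=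
    hU.comp (Computable.fst.comp Computable.snd) (Computable.snd.comp Computable.snd)
  exact h1.bind h2

def W0 : Machine := fun p _ => Part.some p.length

lemma W0_partrec : Partrec₂ W0 := by
  have : Computable fun a : BinStr × ℕ => a.1.length :=
    Computable.list_length.comp Computable.fst
  exact this.partrec

def gW1 : BinStr → ℕ → Option ℕ :=
  fun p _ => (goAux p).bind fun s => if s.2 = ([] : List Bool) then some s.1 else none

def W1 : Machine := fun p y => Part.ofOption (gW1 p y)

lemma gW1_computable : Computable₂ gW1 := by
  have hb : Primrec fun a : BinStr × ℕ =>
      (goAux a.1).bind fun s => if s.2 = ([] : List Bool) then some s.1 else none := by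
    exact Primrec.option_bind (goAux_primrec.comp Primrec.fst)
      ((Primrec.ite (Primrec.eq.comp (Primrec.snd.comp Primrec.snd)
          (Primrec.const ([] : List Bool)))
        (Primrec.option_some.comp (Primrec.fst.comp Primrec.snd))
        (Primrec.const none)).to₂)
  exact hb.to_comp.to₂

lemma W1_partrec : Partrec₂ W1 :=
  Computable.ofOption gW1_computable

def gV2 : BinStr → ℕ → Option (BinStr × ℕ) := fun p _ => some (p, 0)

lemma gV2_computable : Computable₂ gV2 :=
  ((Primrec.option_some.comp (Primrec.fst.pair (Primrec.const 0))).to_comp).to₂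

def gV3 : BinStr → ℕ → Option (BinStr × ℕ) := fun p _ =>
  List.casesOn (motive := fun _ => Option (BinStr × ℕ)) p none fun b rest =>
    (goAux rest).map fun s => (s.2, s.2.length + 2 * s.1 + cond b 1 0)

lemma gV3_computable : Computable₂ gV3 := by
  have : Primrec fun a : BinStr × ℕ =>
      List.casesOn (motive := fun _ => Option (BinStr × ℕ)) a.1 none
      (fun b rest => (goAux rest).map fun s => (s.2, s.2.length + 2 * s.1 + cond b 1 0)) := by
    exact Primrec.list_casesOn Primrec.fst (Primrec.const none)
      ((Primrec.option_map (goAux_primrec.comp (Primrec.snd.comp Primrec.snd))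
        (((Primrec.snd.comp Primrec.snd).pair
          (Primrec.nat_add.comp (Primrec.nat_add.comp
            (Primrec.list_length.comp (Primrec.snd.comp Primrec.snd))
            (Primrec.nat_mul.comp (Primrec.const 2) (Primrec.fst.comp Primrec.snd)))
          (Primrec.cond (Primrec.fst.comp (Primrec.snd.comp Primrec.fst))
            (Primrec.const 1) (Primrec.const 0)))).to₂)).to₂)
  exact this.to_comp.to₂

def gW2 (c : ℕ) : BinStr → ℕ → Option (BinStr × ℕ) := fun q y =>
  if q.length = y + (c + 1) then (goAux q.reverse).map (fun s => (s.2.reverse, y)) else none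

lemma gW2_computable (c : ℕ) : Computable₂ (gW2 c) := by
  have : Primrec fun a : BinStr × ℕ =>
      if a.1.length = a.2 + (c + 1) then (goAux a.1.reverse).map (fun s => (s.2.reverse, a.2))
      else none := by
    refine Primrec.ite (Primrec.eq.comp (Primrec.list_length.comp Primrec.fst)
      (Primrec.nat_add.comp Primrec.snd (Primrec.const (c + 1)))) ?_ (Primrec.const none)
    exact Primrec.option_map (goAux_primrec.comp (Primrec.list_reverse.comp Primrec.fst))
      (((Primrec.list_reverse.comp (Primrec.snd.comp Primrec.snd)).pair
        (Primrec.snd.comp Primrec.fst)).to₂)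
  exact this.to_comp.to₂

-- ### basic cplx lemmas
lemma cplx_le {M : Machine} {x y : ℕ} {p : BinStr} (h : x ∈ M p y) :
    cplx M x y ≤ p.length := Nat.sInf_le ⟨p, rfl, h⟩

lemma cplx_spec {M : Machine} {x y : ℕ} (h : ∃ p, x ∈ M p y) :
    ∃ p : BinStr, p.length = cplx M x y ∧ x ∈ M p y := by
  obtain ⟨p, hp⟩ := h
  have : cplx M x y ∈ {n | ∃ p : BinStr, p.length = n ∧ x ∈ M p y} :=
    Nat.sInf_mem ⟨p.length, p, rfl, hp⟩
  exact this

-- ### membership lemmas for auxiliary machines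
lemma W0_mem (x y : ℕ) : x ∈ W0 (List.replicate x true) y := by
  simp [W0]

lemma W1_mem (x y : ℕ) : x ∈ W1 (List.replicate x true ++ [false]) y := by
  have : goAux (List.replicate x true ++ [false]) = some (x, []) :=
    goAux_replicate x []
  simp [W1, gW1, this]

lemma repl_prefix : ∀ {k k' : ℕ},
    (List.replicate k true ++ [false]) <+: (List.replicate k' true ++ [false]) → k = k' := by
  intro k
  induction k with
  | zero =>
    intro k' h
    cases k' with
    | zero => rfl
    | succ k' =>
      rw [List.replicate_succ] at h
      simp [List.cons_prefix_cons] at h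
  | succ k ih =>
    intro k' h
    cases k' with
    | zero =>
      rw [List.replicate_succ] at h
      simp [List.cons_prefix_cons] at h
    | succ k' =>
      rw [List.replicate_succ, List.replicate_succ] at h
      simp only [List.cons_append, List.cons_prefix_cons, true_and] at h
      exact congrArg Nat.succ (ih h)

lemma W1_dom_form {p : BinStr} {y : ℕ} (h : (W1 p y).Dom) :
    ∃ k, p = List.replicate k true ++ [false] := by
  obtain ⟨v, hv⟩ := Part.dom_iff_mem.mp h
  rw [W1, Part.mem_ofOption] at hv
  simp only [gW1, Option.mem_def, Option.bind_eq_some_iff] at hv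
  obtain ⟨⟨k, rest⟩, hg, hif⟩ := hv
  by_cases hr : rest = ([] : List Bool)
  · subst hr
    exact ⟨k, goAux_eq_some hg⟩
  · simp [hr] at hif

lemma W1_prefixFree : PrefixFreeMachine W1 := by
  intro y p q hpre hdp hdq
  obtain ⟨k, hk⟩ := W1_dom_form hdp
  obtain ⟨k', hk'⟩ := W1_dom_form hdq
  subst hk hk'
  rw [repl_prefix hpre]

lemma V2_mem {U : Machine} {x : ℕ} {p : BinStr} (y : ℕ) (h : x ∈ U p 0) :
    x ∈ preM U gV2 p y := by
  simp only [preM, gV2]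
  rw [Part.mem_bind_iff]
  exact ⟨(p, 0), Part.mem_ofOption.mpr rfl, h⟩

lemma V3_mem {U : Machine} {x d : ℕ} {p : BinStr} (y : ℕ)
    (h : x ∈ U p (p.length + d)) :
    x ∈ preM U gV3 (decide (d % 2 = 1) :: (List.replicate (d / 2) true ++ false :: p)) y := by
  have hg : gV3 (decide (d % 2 = 1) :: (List.replicate (d / 2) true ++ false :: p)) y
      = some (p, p.length + d) := by
    simp only [gV3, goAux_replicate]
    have hc : (2 * (d / 2) + cond (decide (d % 2 = 1)) 1 0) = d := by
      rcases Nat.mod_two_eq_zero_or_one d with h2 | h2 <;> simp [h2] <;> omega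
    simp only [Option.map_some]
    rw [Nat.add_assoc, hc]
  simp only [preM, hg]
  rw [Part.mem_bind_iff]
  exact ⟨(p, p.length + d), Part.mem_ofOption.mpr rfl, h⟩

lemma W2_mem {U : Machine} (c : ℕ) {x n k : ℕ} {p : BinStr}
    (hlen : p.length + 1 + k = n + (c + 1)) (h : x ∈ U p n) :
    x ∈ preM U (gW2 c) (p ++ false :: List.replicate k true) n := by
  have hrev : (p ++ false :: List.replicate k true).reverse
      = List.replicate k true ++ false :: p.reverse := by
    simp [List.reverse_append, List.reverse_cons, List.reverse_replicate]
  have hg : gW2 c (p ++ false :: List.replicate k true) n = some (p, n) := by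
    simp only [gW2, hrev, goAux_replicate]
    rw [if_pos (by simp; omega)]
    simp
  simp only [preM, hg]
  rw [Part.mem_bind_iff]
  exact ⟨(p, n), Part.mem_ofOption.mpr rfl, h⟩

lemma W2_dom_len {U : Machine} {c : ℕ} {q : BinStr} {y : ℕ}
    (h : (preM U (gW2 c) q y).Dom) : q.length = y + (c + 1) := by
  obtain ⟨v, hv⟩ := Part.dom_iff_mem.mp h
  rw [preM, Part.mem_bind_iff] at hv
  obtain ⟨w, hw, -⟩ := hv
  rw [Part.mem_ofOption] at hw
  by_contra hne
  simp [gW2, hne] at hw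

lemma W2_prefixFree (U : Machine) (c : ℕ) : PrefixFreeMachine (preM U (gW2 c)) := by
  intro y p q hpre hdp hdq
  exact hpre.eq_of_length ((W2_dom_len hdp).trans (W2_dom_len hdq).symm)


/-- `C(u | C(u)) = K(u | C(u)) + O(1)`. -/
theorem plain_eq_prefix_on_plain_condition (U V : Machine)
    (hU : IsOptimal U) (hV : IsPrefixOptimal V) :
    ∃ c : ℕ, ∀ u : BinStr,
      |(cplx U (enc u) (cplx0 U (enc u)) : ℤ) - (cplx V (enc u) (cplx0 U (enc u)) : ℤ)|
        ≤ (c : ℤ) := by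
  obtain ⟨hUpc, hUsim⟩ := hU
  obtain ⟨hVpc, hVpf, hVsim⟩ := hV
  obtain ⟨c0, hc0⟩ := hUsim W0 W0_partrec
  have hexU : ∀ x y : ℕ, ∃ p, x ∈ U p y := fun x y => by
    obtain ⟨q, -, hq⟩ := hc0 (List.replicate x true) y x (W0_mem x y)
    exact ⟨q, hq⟩
  obtain ⟨cW1, hcW1⟩ := hVsim W1 W1_partrec W1_prefixFree
  have hexV : ∀ x y : ℕ, ∃ p, x ∈ V p y := fun x y => by
    obtain ⟨q, -, hq⟩ := hcW1 _ y x (W1_mem x y)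
    exact ⟨q, hq⟩
  obtain ⟨c1, hc1⟩ := hUsim V hVpc
  obtain ⟨c2, hc2⟩ := hUsim (preM U gV2) (preM_partrec hUpc gV2_computable)
  obtain ⟨c3, hc3⟩ := hUsim (preM U gV3) (preM_partrec hUpc gV3_computable)
  obtain ⟨c4, hc4⟩ :=
    hVsim (preM U (gW2 c2)) (preM_partrec hUpc (gW2_computable c2)) (W2_prefixFree U c2)
  refine ⟨c1 + c2 + 2 * c3 + c4 + 8, fun u => ?_⟩
  set x := enc u with hx
  have hn0 : cplx0 U x = cplx U x 0 := rfl
  set n := cplx0 U x with hn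
  set m := cplx U x n with hm
  set K := cplx V x n with hK
  -- (a) m ≤ K + c1
  have ha : m ≤ K + c1 := by
    obtain ⟨q, hqlen, hqmem⟩ := cplx_spec (hexV x n)
    obtain ⟨q', hq'len, hq'mem⟩ := hc1 q n x hqmem
    have := cplx_le hq'mem
    omega
  -- witness for n
  obtain ⟨p0, hp0len, hp0mem⟩ := cplx_spec (hexU x 0)
  rw [← hn0] at hp0len
  -- (b) m ≤ n + c2
  have hb : m ≤ n + c2 := by
    obtain ⟨q2, hq2len, hq2mem⟩ := hc2 p0 n x (V2_mem n hp0mem)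
    have := cplx_le hq2mem
    omega
  -- witness for m
  obtain ⟨p, hplen, hpmem⟩ := cplx_spec (hexU x n)
  -- (c) n ≤ m + 2*c3 + 5
  have hcc : n ≤ m + (2 * c3 + 5) := by
    by_cases hmn : m ≤ n
    · set d := n - m with hd
      have hmem' : x ∈ U p (p.length + d) := by
        have : p.length + d = n := by omega
        rw [this]; exact hpmem
      obtain ⟨q3, hq3len, hq3mem⟩ := hc3 _ 0 x (V3_mem 0 hmem')
      have h5 : cplx U x 0 ≤ q3.length := cplx_le hq3mem
      rw [← hn0] at h5
      have hr : (decide (d % 2 = 1) :: (List.replicate (d / 2) true ++ false :: p)).length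
          = d / 2 + p.length + 2 := by
        simp [List.length_cons, List.length_append, List.length_replicate]
        omega
      rw [hr] at hq3len
      omega
    · omega
  -- (d) K ≤ n + (c2 + 1) + c4
  have hdd : K ≤ n + (c2 + 1) + c4 := by
    set k := n + c2 - m with hk
    have hlen : p.length + 1 + k = n + (c2 + 1) := by omega
    obtain ⟨q4, hq4len, hq4mem⟩ := hc4 _ n x (W2_mem c2 hlen hpmem)
    have := cplx_le hq4mem
    have hql : (p ++ false :: List.replicate k true).length = n + (c2 + 1) := by
      simp [List.length_append, List.length_cons, List.length_replicate]
      omega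
    omega
  rw [abs_sub_le_iff]
  constructor <;> push_cast <;> omega
end

section
/- (Levin's characterization of plain complexity via prefix-free complexity.) There exists a constant c such that for every binary string a and every natural number i: if |K(a|i) − i| ≤ c₀ for some fixed constant c₀, then |C(a) − i| ≤ c (where c depends on c₀ but not on a or i). Moreover, C(a) coincides, up to an additive O(1) term, with the minimal i such that K(a|i) ≤ i. -/
namespace LevinAux


/-- drop implemented by iterating `tail` (convenient for primrec proofs). -/
def drop' (n : ℕ) (l : BinStr) : BinStr := (List.tail (α := Bool))^[n] l

lemma drop'_eq (n : ℕ) (l : BinStr) : drop' n l = l.drop n := by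
  induction n with
  | zero => rfl
  | succ n ih =>
      rw [drop', Function.iterate_succ_apply', ← drop', ih, List.tail_drop]

/-- take implemented via reverse and drop'. -/
def take' (t : ℕ) (l : BinStr) : BinStr := (drop' (l.length - t) l.reverse).reverse

lemma take'_eq (t : ℕ) (l : BinStr) : take' t l = l.take t := by
  unfold take'
  rw [drop'_eq, ← List.rdrop_eq_reverse_drop_reverse, List.rdrop]
  rcases le_or_gt t l.length with h | h
  · congr 1; omega
  · rw [Nat.sub_eq_zero_of_le h.le, Nat.sub_zero, List.take_length,
      List.take_of_length_le h.le]

/-- strip a padding `[true] ++ replicate n false` from the end. -/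
def strip (q : BinStr) : BinStr :=
  (drop' (q.reverse.findIdx (fun b => b) + 1) q.reverse).reverse

lemma findIdx_replicate_false (n : ℕ) (x : BinStr) :
    (List.replicate n false ++ true :: x).findIdx (fun b => b) = n := by
  induction n with
  | zero => simp [List.findIdx_cons]
  | succ n ih => simp [List.replicate_succ, List.findIdx_cons, ih]

lemma strip_pad (p : BinStr) (n : ℕ) :
    strip (p ++ [true] ++ List.replicate n false) = p := by
  unfold strip
  have hrev : (p ++ [true] ++ List.replicate n false).reverse
      = List.replicate n false ++ true :: p.reverse := by
    simp [List.reverse_append]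
  rw [hrev, findIdx_replicate_false, drop'_eq]
  have : n + 1 = (List.replicate n false).length + 1 := by simp
  rw [this, List.drop_length_add_append, List.drop_one, List.tail_cons, List.reverse_reverse]

lemma pad_length (p : BinStr) (n : ℕ) :
    (p ++ [true] ++ List.replicate n false).length = p.length + 1 + n := by simp; omega

/-- binary value of an LSB-first bit list -/
def bval (l : BinStr) : ℕ := l.foldr (fun b n => 2 * n + b.toNat) 0

lemma bval_bits (n : ℕ) : bval n.bits = n := by
  induction n using Nat.binaryRec' with
  | zero => simp [Nat.zero_bits, bval]
  | bit b n h ih =>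
      rw [Nat.bits_append_bit n b h]
      show 2 * bval n.bits + b.toNat = _
      rw [ih, ← Nat.bit_val]


open Primrec in
lemma primrec_drop' : Primrec₂ drop' :=
  (Primrec.nat_iterate Primrec.fst Primrec.snd
    ((Primrec.list_tail.comp Primrec.snd).to₂)).to₂

open Primrec in
lemma primrec_take' : Primrec₂ take' :=
  (Primrec.list_reverse.comp <|
    primrec_drop'.comp
      (Primrec.nat_sub.comp (Primrec.list_length.comp .snd) .fst)
      (Primrec.list_reverse.comp .snd)).to₂

open Primrec in
lemma primrec_strip : Primrec strip :=
  Primrec.list_reverse.comp <|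
    primrec_drop'.comp
      (Primrec.succ.comp <|
        Primrec.list_findIdx Primrec.list_reverse (Primrec.snd (β := Bool)).to₂)
      Primrec.list_reverse

lemma primrec_toNat_aux : Primrec (fun x : BinStr × Bool × ℕ => x.2.1.toNat) :=
  (Primrec.cond (Primrec.fst.comp Primrec.snd) (Primrec.const 1)
    (Primrec.const 0)).of_eq (fun x => by rcases x with ⟨a, b, n⟩; cases b <;> rfl)

lemma primrec_bval : Primrec bval :=
  (Primrec.list_foldr Primrec.id (Primrec.const 0) <| Primrec.to₂ <|
    Primrec.nat_add.comp
      (Primrec.nat_double.comp (Primrec.snd.comp Primrec.snd))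
      primrec_toNat_aux).of_eq (fun l => rfl)

/-- number of leading `true`s -/
def parseL (q : BinStr) : ℕ := q.findIdx (fun b => !b)

/-- the number encoded after the unary header -/
def parseD (q : BinStr) : ℕ := bval (take' (parseL q) (drop' (parseL q + 1) q))

open Primrec in
lemma primrec_parseL : Primrec parseL :=
  Primrec.list_findIdx Primrec.id
    ((Primrec.dom_bool Bool.not).comp (Primrec.snd (β := Bool))).to₂

open Primrec in
lemma primrec_parseD : Primrec parseD :=
  primrec_bval.comp <| primrec_take'.comp primrec_parseL <|
    primrec_drop'.comp (Primrec.succ.comp primrec_parseL) Primrec.id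

lemma findIdx_not_replicate (L : ℕ) (x : BinStr) :
    (List.replicate L true ++ false :: x).findIdx (fun b => !b) = L := by
  induction L with
  | zero => simp [List.findIdx_cons]
  | succ n ih => simp [List.replicate_succ, List.findIdx_cons, ih]


/-- The padding machine: reduces plain complexity to conditional prefix complexity. -/
def W (V : Machine) (k : ℕ) : Machine :=
  fun q _ => V (strip q) (q.length - (k + 1))

lemma W_partrec (V : Machine) (hV : Partrec₂ V) (k : ℕ) : Partrec₂ (W V k) :=
  hV.comp ((primrec_strip.comp Primrec.fst).to_comp)
    ((Primrec.nat_sub.comp (Primrec.list_length.comp Primrec.fst)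
      (Primrec.const (k + 1))).to_comp)

lemma W_apply (V : Machine) (k i : ℕ) (p : BinStr) (y : ℕ) (h : p.length ≤ i + k) :
    W V k (p ++ [true] ++ List.replicate (i + k - p.length) false) y = V p i := by
  unfold W
  rw [strip_pad, pad_length]
  congr 1
  omega

/-- The prefix-free machine showing `K(a|i)` is small whenever `i` exceeds `C(a)`. -/
def M (U : Machine) : Machine := fun q i =>
  if q.length = 2 * parseL q + 1 + (i - parseD q) then
    U (strip (drop' (2 * parseL q + 1) q)) 0
  else Part.none

lemma M_dom {U : Machine} {q : BinStr} {i : ℕ} (h : (M U q i).Dom) :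
    q.length = 2 * parseL q + 1 + (i - parseD q) := by
  unfold M at h
  split at h
  · assumption
  · exact absurd h Part.not_none_dom

lemma M_prefixFree (U : Machine) : PrefixFreeMachine (M U) := by
  intro i q q' hpre h1 h2
  obtain ⟨t, rfl⟩ := hpre
  have e1 := M_dom h1
  have e2 := M_dom h2
  have hL : parseL q < q.length := by omega
  have hLq : parseL (q ++ t) = parseL q := by
    unfold parseL at hL ⊢
    rw [List.findIdx_append, if_pos hL]
  have hDq : parseD (q ++ t) = parseD q := by
    unfold parseD
    rw [hLq, drop'_eq, drop'_eq, take'_eq, take'_eq,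
      List.drop_append_of_le_length (by omega),
      List.take_append_of_le_length (by rw [List.length_drop]; omega)]
  rw [hLq, hDq, List.length_append] at e2
  have : t = [] := List.eq_nil_of_length_eq_zero (by omega)
  rw [this, List.append_nil]

/-- canonical program for the machine `M`. -/
def canon (d : ℕ) (p : BinStr) (m : ℕ) : BinStr :=
  List.replicate d.size true ++ [false] ++ d.bits ++ (p ++ [true] ++ List.replicate m false)

lemma canon_shape (d : ℕ) (p : BinStr) (m : ℕ) :
    canon d p m = List.replicate d.size true
      ++ false :: (d.bits ++ (p ++ [true] ++ List.replicate m false)) := by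
  simp [canon]

lemma parseL_canon (d : ℕ) (p : BinStr) (m : ℕ) : parseL (canon d p m) = d.size := by
  rw [canon_shape]; exact findIdx_not_replicate _ _

lemma canon_shape2 (d : ℕ) (p : BinStr) (m : ℕ) :
    canon d p m = (List.replicate d.size true ++ [false])
      ++ (d.bits ++ (p ++ [true] ++ List.replicate m false)) := by
  simp [canon]

lemma parseD_canon (d : ℕ) (p : BinStr) (m : ℕ) : parseD (canon d p m) = d := by
  unfold parseD
  rw [parseL_canon, drop'_eq, take'_eq, canon_shape2,
    List.drop_left' (by simp),
    List.take_left' (Nat.size_eq_bits_len d), bval_bits]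

lemma canon_shape3 (d : ℕ) (p : BinStr) (m : ℕ) :
    canon d p m = ((List.replicate d.size true ++ [false]) ++ d.bits)
      ++ (p ++ [true] ++ List.replicate m false) := by
  simp [canon]

lemma rest_canon (d : ℕ) (p : BinStr) (m : ℕ) :
    drop' (2 * d.size + 1) (canon d p m) = p ++ [true] ++ List.replicate m false := by
  rw [drop'_eq, canon_shape3, List.drop_left' (by
    simp [← Nat.size_eq_bits_len d]; omega)]

lemma canon_length (d : ℕ) (p : BinStr) (m : ℕ) :
    (canon d p m).length = 2 * d.size + 1 + (p.length + 1 + m) := by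
  simp [canon, ← Nat.size_eq_bits_len d]; omega

lemma M_canon (U : Machine) (d : ℕ) (p : BinStr) (i : ℕ) (h : p.length + 1 ≤ i - d) :
    M U (canon d p (i - d - 1 - p.length)) i = U p 0 := by
  have hcond : (canon d p (i - d - 1 - p.length)).length
      = 2 * parseL (canon d p (i - d - 1 - p.length)) + 1
        + (i - parseD (canon d p (i - d - 1 - p.length))) := by
    rw [parseL_canon, parseD_canon, canon_length]; omega
  unfold M
  rw [if_pos hcond, parseL_canon, rest_canon, strip_pad]

lemma M_partrec (U : Machine) (hU : Partrec₂ U) : Partrec₂ (M U) := by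
  have hA : Primrec (fun x : BinStr × ℕ => 2 * parseL x.1 + 1) :=
    Primrec.succ.comp (Primrec.nat_double.comp (primrec_parseL.comp Primrec.fst))
  have hcondPrim : PrimrecPred
      (fun x : BinStr × ℕ => x.1.length = 2 * parseL x.1 + 1 + (x.2 - parseD x.1)) :=
    Primrec.eq.comp (Primrec.list_length.comp Primrec.fst)
      (Primrec.nat_add.comp hA
        (Primrec.nat_sub.comp Primrec.snd (primrec_parseD.comp Primrec.fst)))
  have hg : Computable (fun x : BinStr × ℕ => strip (drop' (2 * parseL x.1 + 1) x.1)) :=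
    (primrec_strip.comp (primrec_drop'.comp hA Primrec.fst)).to_comp
  have key : Partrec fun x : BinStr × ℕ =>
      (Part.ofOption (if x.1.length = 2 * parseL x.1 + 1 + (x.2 - parseD x.1)
          then some 0 else none : Option ℕ)).bind
        (fun _ => U (strip (drop' (2 * parseL x.1 + 1) x.1)) 0) :=
    (Computable.ofOption
        ((Primrec.ite hcondPrim (Primrec.const (some 0)) (Primrec.const none)).to_comp)).bind
      ((hU.comp (hg.comp Computable.fst) (Computable.const 0)).to₂)
  exact key.of_eq fun x => by
    by_cases h : x.1.length = 2 * parseL x.1 + 1 + (x.2 - parseD x.1) <;>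
      simp [M, h]


lemma cplx_le {W : Machine} {x y n : ℕ} {p : BinStr} (hl : p.length = n) (h : x ∈ W p y) :
    cplx W x y ≤ n :=
  Nat.sInf_le ⟨p, hl, h⟩

lemma cplx_exists {W : Machine} {x y : ℕ}
    (hne : {n | ∃ p : BinStr, p.length = n ∧ x ∈ W p y}.Nonempty) :
    ∃ p : BinStr, p.length = cplx W x y ∧ x ∈ W p y :=
  Nat.sInf_mem hne

lemma K_ne (V : Machine) (hV : IsPrefixOptimal V) (a : BinStr) (i : ℕ) :
    {n | ∃ p : BinStr, p.length = n ∧ enc a ∈ V p i}.Nonempty := by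
  set Va : Machine := fun p _ => if p = [] then Part.some (enc a) else Part.none with hVa
  have hpart : Partrec₂ Va := by
    have : Computable (fun x : BinStr × ℕ =>
        (if x.1 = [] then some (enc a) else none : Option ℕ)) :=
      (Primrec.ite (Primrec.eq.comp Primrec.fst (Primrec.const ([] : BinStr)))
        (Primrec.const (some (enc a))) (Primrec.const none)).to_comp
    exact (Computable.ofOption this).of_eq fun x => by
      by_cases h : x.1 = [] <;> simp [Va, h]
  have hpf : PrefixFreeMachine Va := by
    intro y p q _ h1 h2
    have hp : p = [] := by
      by_contra h; rw [hVa] at h1; simp only [if_neg h] at h1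
      exact Part.not_none_dom h1
    have hq : q = [] := by
      by_contra h; rw [hVa] at h2; simp only [if_neg h] at h2
      exact Part.not_none_dom h2
    rw [hp, hq]
  obtain ⟨c, hc⟩ := hV.2.2 Va hpart hpf
  obtain ⟨q, _, hmem⟩ := hc [] i (enc a) (by simp [Va])
  exact ⟨q.length, q, rfl, hmem⟩

lemma C_ne (U : Machine) (hU : IsOptimal U) (a : BinStr) :
    {n | ∃ p : BinStr, p.length = n ∧ enc a ∈ U p 0}.Nonempty := by
  set P : Machine := fun p _ => Part.some (Encodable.encode p) with hP
  have hpart : Partrec₂ P :=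
    Computable.partrec (Computable.encode.comp Computable.fst)
  obtain ⟨c, hc⟩ := hU.2 P hpart
  obtain ⟨q, _, hmem⟩ := hc a 0 (enc a) (by simp [P, enc])
  exact ⟨q.length, q, rfl, hmem⟩

lemma upperC (U V : Machine) (hU : IsOptimal U) (hV : IsPrefixOptimal V) (k : ℕ) :
    ∃ ck : ℕ, ∀ (a : BinStr) (i : ℕ),
      cplx V (enc a) i ≤ i + k → cplx0 U (enc a) ≤ i + k + 1 + ck := by
  obtain ⟨ck, hck⟩ := hU.2 (W V k) (W_partrec V hV.1 k)
  refine ⟨ck, fun a i hKi => ?_⟩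
  obtain ⟨p, hp, hmem⟩ := cplx_exists (K_ne V hV a i)
  have hlen : p.length ≤ i + k := by omega
  have hq : enc a ∈ W V k (p ++ [true] ++ List.replicate (i + k - p.length) false) 0 := by
    rw [W_apply V k i p 0 hlen]; exact hmem
  obtain ⟨q', hq', hmem'⟩ := hck _ 0 (enc a) hq
  have h1 : cplx0 U (enc a) ≤ q'.length := cplx_le rfl hmem'
  have h2 := pad_length p (i + k - p.length)
  omega

lemma upperK (U V : Machine) (hU : IsOptimal U) (hV : IsPrefixOptimal V) :
    ∃ cM : ℕ, ∀ (a : BinStr) (i d : ℕ), cplx0 U (enc a) + 1 ≤ i - d →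
      cplx V (enc a) i ≤ 2 * d.size + 1 + (i - d) + cM := by
  obtain ⟨cM, hcM⟩ := hV.2.2 (M U) (M_partrec U hU.1) (M_prefixFree U)
  refine ⟨cM, fun a i d h => ?_⟩
  obtain ⟨p, hp, hmem⟩ := cplx_exists (C_ne U hU a)
  have hple : p.length + 1 ≤ i - d := by unfold cplx0 at h; omega
  have hq : enc a ∈ M U (canon d p (i - d - 1 - p.length)) i := by
    rw [M_canon U d p i hple]; exact hmem
  obtain ⟨q', hq', hmem'⟩ := hcM _ i (enc a) hq
  have h1 : cplx V (enc a) i ≤ q'.length := cplx_le rfl hmem'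
  have h2 := canon_length d p (i - d - 1 - p.length)
  omega

lemma exists_d (k : ℕ) : ∃ d : ℕ, 2 * Nat.size d + 1 + k < d := by
  refine ⟨2 ^ (k + 6), ?_⟩
  rw [Nat.size_pow]
  have h1 : k + 1 ≤ 2 ^ k := Nat.lt_two_pow_self
  have h2 : 2 ^ (k + 6) = 2 ^ k * 64 := by rw [pow_add]; norm_num
  have h3 : (k + 1) * 64 ≤ 2 ^ k * 64 := Nat.mul_le_mul_right 64 h1
  omega

end LevinAux

/-- **Levin's characterization of plain complexity.**
If `|K(a|i) − i| ≤ c₀` then `|C(a) − i| ≤ c` for a constant `c` depending only on `c₀`;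
moreover `C(a)` coincides up to `O(1)` with the minimal `i` such that `K(a|i) ≤ i`. -/


theorem levin_characterization (U V : Machine) (hU : IsOptimal U) (hV : IsPrefixOptimal V) :
    (∀ c₀ : ℕ, ∃ c : ℕ, ∀ (a : BinStr) (i : ℕ),
        |(cplx V (enc a) i : ℤ) - (i : ℤ)| ≤ (c₀ : ℤ) →
        |(cplx0 U (enc a) : ℤ) - (i : ℤ)| ≤ (c : ℤ)) ∧
    (∃ c : ℕ, ∀ a : BinStr,
        |(cplx0 U (enc a) : ℤ) - ((sInf {i : ℕ | cplx V (enc a) i ≤ i} : ℕ) : ℤ)| ≤ (c : ℤ)) := by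
  constructor
  · intro c₀
    obtain ⟨cW, hcW⟩ := LevinAux.upperC U V hU hV c₀
    obtain ⟨cM, hcM⟩ := LevinAux.upperK U V hU hV
    obtain ⟨d, hd⟩ := LevinAux.exists_d (cM + c₀)
    refine ⟨c₀ + 1 + cW + d + 1, fun a i h => ?_⟩
    rw [abs_sub_le_iff] at h ⊢
    obtain ⟨ha, hb⟩ := h
    have h1 : cplx V (enc a) i ≤ i + c₀ := by omega
    have h2 : i ≤ cplx V (enc a) i + c₀ := by omega
    have hupper : cplx0 U (enc a) ≤ i + c₀ + 1 + cW := hcW a i h1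
    have hlower : i ≤ cplx0 U (enc a) + d + 1 := by
      by_contra hcon
      push_neg at hcon
      have hge : cplx0 U (enc a) + 1 ≤ i - d := by omega
      have := hcM a i d hge
      omega
    constructor <;> [skip; skip] <;>
      · push_cast
        omega
  · obtain ⟨cW, hcW⟩ := LevinAux.upperC U V hU hV 0
    obtain ⟨cM, hcM⟩ := LevinAux.upperK U V hU hV
    obtain ⟨d, hd⟩ := LevinAux.exists_d cM
    refine ⟨d + 1 + cW + 1, fun a => ?_⟩
    set m := sInf {i : ℕ | cplx V (enc a) i ≤ i} with hm
    have hmem : cplx0 U (enc a) + d + 1 ∈ {i : ℕ | cplx V (enc a) i ≤ i} := by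
      have h := hcM a (cplx0 U (enc a) + d + 1) d (by omega)
      simp only [Set.mem_setOf_eq]
      omega
    have hub : m ≤ cplx0 U (enc a) + d + 1 := Nat.sInf_le hmem
    have hKm : cplx V (enc a) m ≤ m := Nat.sInf_mem (⟨_, hmem⟩ :
      {i : ℕ | cplx V (enc a) i ≤ i}.Nonempty)
    have hC : cplx0 U (enc a) ≤ m + 0 + 1 + cW := hcW a m (by omega)
    rw [abs_sub_le_iff]
    constructor <;>
      · push_cast
        omega
end

section
/- It is NOT the case that C(a,b) ≤ C(a) + K(b|a) + O(1): for every constant c there exist binary strings a, b with C(a,b) > C(a) + K(b|a) + c. In fact, there is a constant c₀ such that for infinitely many pairs (x,y) of binary strings, C(x,y) ≥ C(x) + K(y|x) + log₂ n − 2·log₂ log₂ n − c₀, where n = |x| + |y| is the total length. -/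
namespace NMA

/-! ### Bit strings as numbers -/

def numOf (p : BinStr) : ℕ := p.foldr (fun b n => 2 * n + cond b 1 0) 0

@[simp] lemma numOf_nil : numOf [] = 0 := rfl
@[simp] lemma numOf_cons (b : Bool) (p : BinStr) :
    numOf (b :: p) = 2 * numOf p + cond b 1 0 := rfl

lemma numOf_lt (p : BinStr) : numOf p < 2 ^ p.length := by
  induction p with
  | nil => simp
  | cons b p ih => cases b <;> simp [pow_succ] <;> omega

lemma numOf_inj : ∀ {p q : BinStr}, p.length = q.length → numOf p = numOf q → p = q
  | [], [], _, _ => rfl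
  | [], _ :: _, hl, _ => by simp at hl
  | _ :: _, [], hl, _ => by simp at hl
  | b :: p, c :: q, hl, hn => by
    simp only [List.length_cons, Nat.add_right_cancel_iff] at hl
    simp only [numOf_cons] at hn
    have hb : b = c ∧ numOf p = numOf q := by
      cases b <;> cases c <;> simp at hn ⊢ <;> omega
    rw [hb.1, numOf_inj hl hb.2]

def bitsOf : ℕ → ℕ → BinStr
  | 0, _ => []
  | n + 1, k => (decide (k % 2 = 1)) :: bitsOf n (k / 2)

@[simp] lemma bitsOf_length (n k : ℕ) : (bitsOf n k).length = n := by
  induction n generalizing k with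
  | zero => rfl
  | succ n ih => simp [bitsOf, ih]

lemma numOf_bitsOf (n k : ℕ) (h : k < 2 ^ n) : numOf (bitsOf n k) = k := by
  induction n generalizing k with
  | zero =>
    simp only [pow_zero, Nat.lt_one_iff] at h
    simp [h, bitsOf]
  | succ n ih =>
    rw [pow_succ] at h
    have h2 : k / 2 < 2 ^ n := by omega
    rw [bitsOf, numOf_cons, ih _ h2]
    rcases Nat.mod_two_eq_zero_or_one k with h0 | h0 <;> simp [h0] <;> omega

lemma numOf_surj (k : ℕ) : ∃ p : BinStr, numOf p = k :=
  ⟨bitsOf (k + 1) k,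
    numOf_bitsOf _ _ (lt_of_lt_of_le (Nat.lt_two_pow_self (n := k))
      (Nat.pow_le_pow_right (by norm_num) (Nat.le_succ k)))⟩

def idx (p : BinStr) : ℕ := 2 ^ p.length + numOf p - 1

lemma idx_lt (p : BinStr) : idx p < 2 ^ (p.length + 1) - 1 := by
  have h1 := numOf_lt p
  have h2 : (1 : ℕ) ≤ 2 ^ p.length := Nat.one_le_two_pow
  rw [idx, pow_succ]; omega

lemma idx_inj : Function.Injective idx := by
  intro p q h
  have hp := numOf_lt p; have hq := numOf_lt q
  have hp1 : (1 : ℕ) ≤ 2 ^ p.length := Nat.one_le_two_pow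
  have hq1 : (1 : ℕ) ≤ 2 ^ q.length := Nat.one_le_two_pow
  rw [idx, idx] at h
  have h1 : 2 ^ p.length + numOf p = 2 ^ q.length + numOf q := by omega
  have hlen : p.length = q.length := by
    rcases lt_trichotomy p.length q.length with hl | hl | hl
    · have h2 : 2 ^ (p.length + 1) ≤ 2 ^ q.length := Nat.pow_le_pow_right (by norm_num) hl
      rw [pow_succ] at h2; omega
    · exact hl
    · have h2 : 2 ^ (q.length + 1) ≤ 2 ^ p.length := Nat.pow_le_pow_right (by norm_num) hl
      rw [pow_succ] at h2; omega
  refine numOf_inj hlen ?_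
  rw [hlen] at h1; omega

/-! ### cplx basics -/

lemma cplx_le_length {M : Machine} {x y : ℕ} {p : BinStr} (h : x ∈ M p y) :
    cplx M x y ≤ p.length :=
  Nat.sInf_le ⟨p, rfl, h⟩

lemma exists_min_program {M : Machine} {x y : ℕ} (h : ∃ p : BinStr, x ∈ M p y) :
    ∃ p : BinStr, p.length = cplx M x y ∧ x ∈ M p y := by
  obtain ⟨p0, hp0⟩ := h
  have hne : {n | ∃ p : BinStr, p.length = n ∧ x ∈ M p y}.Nonempty :=
    ⟨p0.length, p0, rfl, hp0⟩
  exact Nat.sInf_mem hne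

lemma sim_le {U : Machine}
    (hU2 : ∀ V : Machine, Partrec₂ V →
      ∃ c : ℕ, ∀ (p : BinStr) (y x : ℕ), x ∈ V p y →
        ∃ q : BinStr, q.length ≤ p.length + c ∧ x ∈ U q y)
    {W : Machine} (hW : Partrec₂ W) :
    ∃ c : ℕ, ∀ (p : BinStr) (y x : ℕ), x ∈ W p y → cplx U x y ≤ p.length + c := by
  obtain ⟨c, hc⟩ := hU2 W hW
  refine ⟨c, fun p y x hx => ?_⟩
  obtain ⟨q, hq1, hq2⟩ := hc p y x hx
  exact (cplx_le_length hq2).trans hq1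

/-! ### Primrec helpers -/

lemma primrec_pow : Primrec₂ ((· ^ ·) : ℕ → ℕ → ℕ) := Primrec₂.unpaired'.1 Nat.Primrec.pow

lemma primrec_pow2pow : Primrec fun k : ℕ => 2 ^ 2 ^ k :=
  primrec_pow.comp (Primrec.const 2) (primrec_pow.comp (Primrec.const 2) Primrec.id)

lemma primrec_numOf : Primrec numOf := by
  have h : Primrec fun q : BinStr × (Bool × ℕ) => 2 * q.2.2 + cond q.2.1 1 0 :=
    Primrec.nat_add.comp
      (Primrec.nat_mul.comp (Primrec.const 2) (Primrec.snd.comp Primrec.snd))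
      (Primrec.cond (Primrec.fst.comp Primrec.snd) (Primrec.const 1) (Primrec.const 0))
  exact (Primrec.list_foldr Primrec.id (Primrec.const 0) h.to₂).of_eq fun p => rfl

def tStep (m acc : ℕ) : ℕ := if 2 ^ 2 ^ acc < m then acc + 1 else acc

def tOf (m : ℕ) : ℕ := Nat.rec (motive := fun _ => ℕ) 0 (fun _ acc => tStep m acc) m

lemma primrec_tOf : Primrec tOf := by
  have h : Primrec fun q : ℕ × (ℕ × ℕ) => tStep q.1 q.2.2 := by
    unfold tStep
    exact Primrec.ite
      (Primrec.nat_lt.comp (primrec_pow2pow.comp (Primrec.snd.comp Primrec.snd)) Primrec.fst)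
      (Primrec.succ.comp (Primrec.snd.comp Primrec.snd))
      (Primrec.snd.comp Primrec.snd)
  exact (Primrec.nat_rec' Primrec.id (Primrec.const 0) h.to₂).of_eq fun m => rfl

lemma tOf_spec (m t : ℕ) (h1 : ∀ t' < t, 2 ^ 2 ^ t' < m) (h2 : m ≤ 2 ^ 2 ^ t)
    (h3 : t ≤ m) : tOf m = t := by
  have aux : ∀ k, (Nat.rec (motive := fun _ => ℕ) 0 (fun _ acc => tStep m acc) k : ℕ)
      = min t k := by
    intro k
    induction k with
    | zero => simp
    | succ k ih =>
      have hstep : (Nat.rec (motive := fun _ => ℕ) 0 (fun _ acc => tStep m acc) (k + 1) : ℕ)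
          = tStep m (Nat.rec (motive := fun _ => ℕ) 0 (fun _ acc => tStep m acc) k) := rfl
      rw [hstep, ih]
      rcases lt_or_ge k t with hk | hk
      · have hmin : min t k = k := min_eq_right hk.le
        rw [hmin, tStep, if_pos (h1 k hk)]
        omega
      · have hmin : min t k = t := min_eq_left hk
        rw [hmin, tStep, if_neg (not_lt.2 h2)]
        omega
  have := aux m
  rw [tOf, this]
  omega

/-! ### Machine for C(x) ≤ |x| + O(1) -/

def Vlen : Machine := fun p _ => Part.some (Encodable.encode p)

lemma partrec_Vlen : Partrec₂ Vlen :=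
  Computable.partrec (Computable.encode.comp Computable.fst)

lemma mem_Vlen (p : BinStr) (y : ℕ) : enc p ∈ Vlen p y := Part.mem_some_iff.2 rfl

/-! ### Machine for program existence -/

def Vnum : Machine := fun p _ => Part.some (numOf p)

lemma partrec_Vnum : Partrec₂ Vnum :=
  Computable.partrec ((primrec_numOf.comp Primrec.fst).to_comp)

lemma exists_prog {U : Machine} (hU : IsOptimal U) (x y : ℕ) : ∃ p : BinStr, x ∈ U p y := by
  obtain ⟨c, hc⟩ := hU.2 Vnum partrec_Vnum
  obtain ⟨p, hp⟩ := numOf_surj x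
  obtain ⟨q, _, hq⟩ := hc p y x (Part.mem_some_iff.2 hp.symm)
  exact ⟨q, hq⟩

/-! ### Counting lower bound -/

lemma counting {U : Machine} (hU : IsOptimal U) (N L : ℕ) (hNL : 2 ^ L ≤ N)
    (ψ : ℕ → ℕ) (hinj : ∀ u < N, ∀ v < N, ψ u = ψ v → u = v) :
    ∃ u < N, L ≤ cplx0 U (ψ u) := by
  by_contra hcon
  push_neg at hcon
  have hmin : ∀ u : ℕ, ∃ p : BinStr, p.length = cplx0 U (ψ u) ∧ ψ u ∈ U p 0 :=
    fun u => exists_min_program (exists_prog hU (ψ u) 0)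
  have h2L : (1 : ℕ) ≤ 2 ^ L := Nat.one_le_two_pow
  have hcard := Finset.card_le_card_of_injOn (fun u => idx (hmin u).choose)
      (s := Finset.range N) (t := Finset.range (2 ^ L - 1)) ?_ ?_
  · simp only [Finset.card_range] at hcard
    omega
  · intro u hu
    simp only [Finset.mem_coe, Finset.mem_range] at hu ⊢
    have h1 : (hmin u).choose.length < L := by
      rw [(hmin u).choose_spec.1]; exact hcon u hu
    have h2 := idx_lt (hmin u).choose
    have h3 : 2 ^ ((hmin u).choose.length + 1) ≤ 2 ^ L :=
      Nat.pow_le_pow_right (by norm_num) (by omega)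
    omega
  · intro u hu v hv hFe
    simp only [Finset.coe_range, Set.mem_Iio] at hu hv
    have hpe : (hmin u).choose = (hmin v).choose := idx_inj hFe
    have h5 : ψ u ∈ U ((hmin v).choose) 0 := by
      rw [← hpe]; exact (hmin u).choose_spec.2
    exact hinj u hu v hv (Part.mem_unique h5 (hmin v).choose_spec.2)

/-! ### The prefix-free machine -/

def gW (p : BinStr) (y : ℕ) : Option ℕ :=
  (Encodable.decode (α := BinStr) y).bind fun x =>
    if p.length + x.length = 2 ^ 2 ^ tOf x.length then some (Encodable.encode p) else none

def W : Machine := fun p y => Part.ofOption (gW p y)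

lemma primrec_gW : Primrec fun pr : BinStr × ℕ => gW pr.1 pr.2 := by
  have hinner : Primrec fun q : (BinStr × ℕ) × BinStr =>
      if q.1.1.length + q.2.length = 2 ^ 2 ^ tOf q.2.length
      then some (Encodable.encode q.1.1) else (none : Option ℕ) :=
    Primrec.ite
      (Primrec.eq.comp
        (Primrec.nat_add.comp (Primrec.list_length.comp (Primrec.fst.comp Primrec.fst))
          (Primrec.list_length.comp Primrec.snd))
        (primrec_pow2pow.comp (primrec_tOf.comp (Primrec.list_length.comp Primrec.snd))))
      (Primrec.option_some.comp (Primrec.encode.comp (Primrec.fst.comp Primrec.fst)))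
      (Primrec.const none)
  exact Primrec.option_bind (Primrec.decode.comp Primrec.snd) hinner.to₂

lemma partrec_W : Partrec₂ W :=
  Computable.ofOption primrec_gW.to_comp

lemma gW_dom {p : BinStr} {y : ℕ} (h : (gW p y).isSome) :
    ∃ x : BinStr, Encodable.decode (α := BinStr) y = some x ∧
      p.length + x.length = 2 ^ 2 ^ tOf x.length := by
  rcases hdy : Encodable.decode (α := BinStr) y with _ | x
  · rw [gW, hdy] at h; simp at h
  · rw [gW, hdy] at h
    have h' : (if p.length + x.length = 2 ^ 2 ^ tOf x.length
        then some (Encodable.encode p) else (none : Option ℕ)).isSome := h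
    split at h'
    · exact ⟨x, rfl, by assumption⟩
    · simp at h'

lemma prefixFree_W : PrefixFreeMachine W := by
  intro y p q hpq hp hq
  rw [W, Part.ofOption_dom] at hp hq
  obtain ⟨x, hdx, hpl⟩ := gW_dom hp
  obtain ⟨x', hdx', hql⟩ := gW_dom hq
  rw [hdx] at hdx'
  cases hdx'
  exact hpq.eq_of_length (by omega)

lemma mem_W {p x : BinStr} (h : p.length + x.length = 2 ^ 2 ^ tOf x.length) :
    enc p ∈ W p (enc x) := by
  rw [W, gW]
  have hdx : Encodable.decode (α := BinStr) (enc x) = some x := Encodable.encodek x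
  rw [hdx]
  show enc p ∈ Part.ofOption (if p.length + x.length = 2 ^ 2 ^ tOf x.length
      then some (Encodable.encode p) else (none : Option ℕ))
  rw [if_pos h]
  exact Part.mem_ofOption.2 rfl

/-! ### Translation machine for the pair -/

def f3 (w : ℕ) : ℕ :=
  (((Encodable.decode (α := BinStr) w.unpair.1).bind fun x =>
    (Encodable.decode (α := BinStr) w.unpair.2).map fun b =>
      Nat.pair (Encodable.encode (x ++ b)) x.length) : Option ℕ).getD 0

lemma f3_eval (x b : BinStr) :
    f3 (Nat.pair (enc x) (enc b)) = Nat.pair (enc (x ++ b)) x.length := by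
  rw [f3]
  simp [enc, Nat.unpair_pair, Encodable.encodek]

lemma primrec_f3 : Primrec f3 := by
  have h1 : Primrec fun w : ℕ => Encodable.decode (α := BinStr) w.unpair.1 :=
    Primrec.decode.comp (Primrec.fst.comp Primrec.unpair)
  have h2 : Primrec fun q : ℕ × BinStr => Encodable.decode (α := BinStr) q.1.unpair.2 :=
    Primrec.decode.comp (Primrec.snd.comp (Primrec.unpair.comp Primrec.fst))
  have h3 : Primrec fun r : (ℕ × BinStr) × BinStr =>
      Nat.pair (Encodable.encode (r.1.2 ++ r.2)) r.1.2.length :=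
    Primrec₂.natPair.comp
      (Primrec.encode.comp
        (Primrec.list_append.comp (Primrec.snd.comp Primrec.fst) Primrec.snd))
      (Primrec.list_length.comp (Primrec.snd.comp Primrec.fst))
  have h4 : Primrec fun w : ℕ =>
      ((Encodable.decode (α := BinStr) w.unpair.1).bind fun x =>
        (Encodable.decode (α := BinStr) w.unpair.2).map fun b =>
          Nat.pair (Encodable.encode (x ++ b)) x.length) :=
    Primrec.option_bind h1 (Primrec.option_map h2 h3.to₂).to₂
  exact Primrec.option_getD.comp h4 (Primrec.const 0)

def V3 (U : Machine) : Machine := fun p y => (U p y).map f3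

lemma partrec_V3 {U : Machine} (hU : Partrec₂ U) : Partrec₂ (V3 U) :=
  hU.map ((primrec_f3.to_comp.comp Computable.snd).to₂)

/-! ### The key construction -/

lemma key (U V : Machine) (hU : IsOptimal U) (hV : IsPrefixOptimal V) :
    ∃ c₀ : ℕ, ∀ t : ℕ, 1 ≤ t → ∃ a b : BinStr,
      a.length + b.length = 2 ^ 2 ^ t ∧
      cplx0 U (enc a) + cplx V (enc b) (enc a) + 2 ^ t
        ≤ cplx0 U (Nat.pair (enc a) (enc b)) + c₀ := by
  obtain ⟨c₁, hc₁⟩ := sim_le hU.2 partrec_Vlen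
  obtain ⟨c₂, hc₂⟩ := hV.2.2 W partrec_W prefixFree_W
  obtain ⟨c₃, hc₃⟩ := sim_le hU.2 (partrec_V3 hU.1)
  refine ⟨c₁ + c₂ + c₃ + 1, fun t ht => ?_⟩
  set n := 2 ^ 2 ^ t with hn
  set s := 2 ^ 2 ^ (t - 1) with hs
  set l := 2 ^ t with hl
  have hl1 : (1 : ℕ) ≤ l := Nat.one_le_two_pow
  have hs1 : (1 : ℕ) ≤ s := Nat.one_le_two_pow
  have hlt : l = 2 * 2 ^ (t - 1) := by
    rw [hl, ← pow_succ']
    congr 1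
    omega
  have ht1 : 2 ^ (t - 1) ≤ l - 1 := by
    have := Nat.one_le_two_pow (n := t - 1)
    omega
  have hs_le : s ≤ 2 ^ (l - 1) := Nat.pow_le_pow_right (by norm_num) ht1
  have hn_eq : n = 2 * 2 ^ (l - 1) := by
    rw [hn, ← pow_succ']
    congr 1
    omega
  have h2l1 : (1:ℕ) ≤ 2 ^ (l - 1) := Nat.one_le_two_pow
  have hsn : s < n := by omega
  have hns : 2 ^ (l - 1) ≤ n - s := by omega
  set N := (n - s) * 2 ^ n with hN
  set L := n + (l - 1) with hLdef
  have h2n1 : (1:ℕ) ≤ 2 ^ n := Nat.one_le_two_pow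
  have hNL : 2 ^ L ≤ N := by
    rw [hLdef, pow_add, hN]
    calc 2 ^ n * 2 ^ (l - 1) ≤ 2 ^ n * (n - s) := Nat.mul_le_mul_left _ hns
      _ = (n - s) * 2 ^ n := Nat.mul_comm _ _
  set ψ : ℕ → ℕ := fun u => Nat.pair (enc (bitsOf n (u % 2 ^ n))) (s + 1 + u / 2 ^ n)
    with hψ
  have hinj : ∀ u < N, ∀ v < N, ψ u = ψ v → u = v := by
    intro u hu v hv he
    rw [hψ] at he
    simp only [Nat.pair_eq_pair] at he
    have hub : u % 2 ^ n < 2 ^ n := Nat.mod_lt _ (pow_pos (by norm_num) _)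
    have hvb : v % 2 ^ n < 2 ^ n := Nat.mod_lt _ (pow_pos (by norm_num) _)
    have hz : bitsOf n (u % 2 ^ n) = bitsOf n (v % 2 ^ n) :=
      Encodable.encode_injective he.1
    have h2 : u % 2 ^ n = v % 2 ^ n := by
      calc u % 2 ^ n = numOf (bitsOf n (u % 2 ^ n)) := (numOf_bitsOf _ _ hub).symm
        _ = numOf (bitsOf n (v % 2 ^ n)) := by rw [hz]
        _ = v % 2 ^ n := numOf_bitsOf _ _ hvb
    have h3 : u / 2 ^ n = v / 2 ^ n := Nat.add_left_cancel he.2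
    conv_lhs => rw [← Nat.div_add_mod u (2 ^ n)]
    conv_rhs => rw [← Nat.div_add_mod v (2 ^ n)]
    rw [h2, h3]
  obtain ⟨u, hu, hLle⟩ := counting hU N L hNL ψ hinj
  set dq := u / 2 ^ n with hdq
  set dr := u % 2 ^ n with hdr
  have hdq_lt : dq < n - s := by
    rw [hdq, Nat.div_lt_iff_lt_mul (pow_pos (by norm_num) _)]
    calc u < N := hu
      _ = (n - s) * 2 ^ n := hN
  set m := s + 1 + dq with hm
  set z := bitsOf n dr with hz
  have hψu : ψ u = Nat.pair (enc z) m := rfl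
  clear_value dq dr
  clear hdq hdr
  have hzlen : z.length = n := bitsOf_length _ _
  have hm1 : s < m := by omega
  have hm2 : m ≤ n := by omega
  set a := z.take m with ha
  set b := z.drop m with hb
  have hal : a.length = m := by
    rw [ha, List.length_take, hzlen]
    omega
  have hbl : b.length = n - m := by
    rw [hb, List.length_drop, hzlen]
  have hab : a ++ b = z := List.take_append_drop _ _
  -- C(a) ≤ m + c₁
  have hCa : cplx0 U (enc a) ≤ m + c₁ := by
    have h := hc₁ a 0 (enc a) (mem_Vlen a 0)
    rw [hal] at h
    exact h
  -- tOf m = t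
  have htOf : tOf m = t := by
    refine tOf_spec m t (fun t' ht' => ?_) (by rw [← hn]; omega) ?_
    · have h1 : t' ≤ t - 1 := by omega
      have h2 : (2:ℕ) ^ t' ≤ 2 ^ (t - 1) := Nat.pow_le_pow_right (by norm_num) h1
      have h3 : (2:ℕ) ^ 2 ^ t' ≤ 2 ^ 2 ^ (t - 1) := Nat.pow_le_pow_right (by norm_num) h2
      rw [← hs] at h3
      omega
    · have h1 : t - 1 < 2 ^ (t - 1) := Nat.lt_two_pow_self
      have h2 : t ≤ 2 ^ (t - 1) := by omega
      have h3 : (2:ℕ) ^ (t - 1) ≤ 2 ^ 2 ^ (t - 1) :=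
        Nat.pow_le_pow_right (by norm_num) (Nat.le_of_lt (Nat.lt_two_pow_self))
      rw [← hs] at h3
      omega
  -- K(b|a) ≤ (n - m) + c₂
  have hKb : cplx V (enc b) (enc a) ≤ (n - m) + c₂ := by
    have hmem : enc b ∈ W b (enc a) := by
      refine mem_W ?_
      rw [hbl, hal, htOf, ← hn]
      omega
    obtain ⟨q, hq1, hq2⟩ := hc₂ b (enc a) (enc b) hmem
    rw [hbl] at hq1
    exact (cplx_le_length hq2).trans hq1
  -- pair lower bound
  have hpair : L ≤ cplx0 U (Nat.pair (enc a) (enc b)) + c₃ := by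
    obtain ⟨p, hp1, hp2⟩ := exists_min_program
      (exists_prog hU (Nat.pair (enc a) (enc b)) 0)
    have hmem3 : ψ u ∈ V3 U p 0 := by
      rw [hψu]
      have := Part.mem_map f3 hp2
      rwa [f3_eval, hab, hal] at this
    have h := hc₃ p 0 (ψ u) hmem3
    rw [hp1] at h
    exact hLle.trans h
  refine ⟨a, b, by rw [hal, hbl]; omega, ?_⟩
  omega

end NMA

/-- It is not the case that `C(a,b) ≤ C(a) + K(b|a) + O(1)`; in fact,
for some constant `c₀` there are infinitely many pairs `(x,y)` with
`C(x,y) ≥ C(x) + K(y|x) + log₂ n − 2·log₂ log₂ n − c₀`, where `n = |x| + |y|`. -/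
theorem no_mixed_additivity (U V : Machine) (hU : IsOptimal U) (hV : IsPrefixOptimal V) :
    (∀ c : ℕ, ∃ a b : BinStr,
        cplx0 U (enc a) + cplx V (enc b) (enc a) + c <
          cplx0 U (Nat.pair (enc a) (enc b))) ∧
    (∃ c₀ : ℕ, {xy : BinStr × BinStr |
        (cplx0 U (enc xy.1) : ℤ) + (cplx V (enc xy.2) (enc xy.1) : ℤ)
            + (Nat.log 2 (xy.1.length + xy.2.length) : ℤ)
            - 2 * (Nat.log 2 (Nat.log 2 (xy.1.length + xy.2.length)) : ℤ) - (c₀ : ℤ)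
          ≤ (cplx0 U (Nat.pair (enc xy.1) (enc xy.2)) : ℤ)}.Infinite) := by
  obtain ⟨c₀, hc₀⟩ := NMA.key U V hU hV
  constructor
  · intro c
    obtain ⟨a, b, _, hineq⟩ := hc₀ (c + c₀ + 1) (by omega)
    refine ⟨a, b, ?_⟩
    have h2 : c + c₀ + 1 < 2 ^ (c + c₀ + 1) := Nat.lt_two_pow_self
    omega
  · refine ⟨c₀, ?_⟩
    have H : ∀ k : ℕ, ∃ ab : BinStr × BinStr,
        ab.1.length + ab.2.length = 2 ^ 2 ^ (k + 1) ∧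
        cplx0 U (enc ab.1) + cplx V (enc ab.2) (enc ab.1) + 2 ^ (k + 1)
          ≤ cplx0 U (Nat.pair (enc ab.1) (enc ab.2)) + c₀ := by
      intro k
      obtain ⟨a, b, h1, h2⟩ := hc₀ (k + 1) (by omega)
      exact ⟨(a, b), h1, h2⟩
    refine Set.infinite_of_injective_forall_mem
      (f := fun k : ℕ => (H k).choose) ?_ ?_
    · intro k k' he
      have he' : (H k).choose = (H k').choose := he
      have h1 := (H k).choose_spec.1
      have h2 := (H k').choose_spec.1
      rw [he', h2] at h1
      have h3 : (2:ℕ) ^ (k' + 1) = 2 ^ (k + 1) :=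
        Nat.pow_right_injective (le_refl 2) h1
      have h4 : k' + 1 = k + 1 := Nat.pow_right_injective (le_refl 2) h3
      omega
    · intro k
      obtain ⟨h1, h2⟩ := (H k).choose_spec
      simp only [Set.mem_setOf_eq]
      rw [h1, Nat.log_pow (by norm_num : (1:ℕ) < 2),
        Nat.log_pow (by norm_num : (1:ℕ) < 2)]
      have hcast : (↑(cplx0 U (enc (H k).choose.1)
            + cplx V (enc (H k).choose.2) (enc (H k).choose.1) + 2 ^ (k + 1)) : ℤ)
          ≤ (↑(cplx0 U (Nat.pair (enc (H k).choose.1) (enc (H k).choose.2)) + c₀) : ℤ) :=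
        Nat.cast_le.2 h2
      have hk : (0:ℤ) ≤ (k : ℤ) := Int.natCast_nonneg k
      push_cast at hcast ⊢
      linarith
end

section
/- Conditional prefix-free complexity K(y|x) cannot be characterized as the minimal prefix-free complexity of a program mapping x to y: it is NOT the case that K(y|x) = min{ K(p) : U(p,x) = y } + O(1), where U is the optimal universal machine. In fact, for every constant c there exist strings x, y with min{ K(p) : U(p,x) = y } > K(y|x) + c. -/
/-! ### Auxiliary machinery -/

/-- decode a natural number back to a binary string (default `[]`). -/
def decStr (n : ℕ) : BinStr := (Encodable.decode (α := List Bool) n).getD []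

lemma decStr_enc (s : BinStr) : decStr (enc s) = s := by
  simp [decStr, enc, Encodable.encodek]

lemma decStr_primrec : Primrec decStr :=
  Primrec.option_getD.comp Primrec.decode (Primrec.const [])

/-- identity-on-length machine: on a program `q` and a condition encoding a string of
the same length as `q`, output `q` itself. -/
def mach1 : Machine := fun q c =>
  ((if q.length = (decStr c).length then some (enc q) else none : Option ℕ) : Part ℕ)

/-- unary decoder machine: on a program of the shape `true^m ++ [false]`, output `m`. -/
def mach3 : Machine := fun q _ =>
  ((if q = List.replicate (q.length - 1) true ++ [false] then some (q.length - 1) else none : Option ℕ) : Part ℕ)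

lemma mach1_partrec : Partrec₂ mach1 := by
  have hcomp : Computable (fun p : BinStr × ℕ =>
      (if p.1.length = (decStr p.2).length then some (enc p.1) else none : Option ℕ)) := by
    have hpred : PrimrecPred (fun p : BinStr × ℕ =>
        p.1.length = (decStr p.2).length) :=
      Primrec.eq.comp (Primrec.list_length.comp Primrec.fst)
        (Primrec.list_length.comp (decStr_primrec.comp Primrec.snd))
    exact (Primrec.ite hpred (Primrec.option_some.comp (Primrec.encode.comp Primrec.fst))
      (Primrec.const none)).to_comp
  exact (Computable.ofOption hcomp : _)

lemma mach3_partrec : Partrec₂ mach3 := by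
  have hrep : Primrec (fun q : BinStr => List.replicate (q.length - 1) true) := by
    have h1 : Primrec (fun q : BinStr => (List.range (q.length - 1)).map (fun _ => true)) :=
      Primrec.list_map (Primrec.list_range.comp (Primrec.pred.comp Primrec.list_length))
        (Primrec.const true).to₂
    exact h1.of_eq fun q => by
      simp [List.map_const']
  have hcomp : Computable (fun p : BinStr × ℕ =>
      (if p.1 = List.replicate (p.1.length - 1) true ++ [false] then some (p.1.length - 1)
        else none : Option ℕ)) := by
    have hpred : PrimrecPred (fun p : BinStr × ℕ =>
        p.1 = List.replicate (p.1.length - 1) true ++ [false]) :=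
      Primrec.eq.comp Primrec.fst
        (Primrec.list_append.comp (hrep.comp Primrec.fst) (Primrec.const [false]))
    exact (Primrec.ite hpred
      (Primrec.option_some.comp (Primrec.pred.comp (Primrec.list_length.comp Primrec.fst)))
      (Primrec.const none)).to_comp
  exact (Computable.ofOption hcomp : _)

lemma opt_dom {c : Prop} [Decidable c] {v : ℕ}
    (h : ((if c then some v else none : Option ℕ) : Part ℕ).Dom) : c := by
  by_cases hc : c
  · exact hc
  · simp [hc] at h

lemma mach1_pf : PrefixFreeMachine mach1 := by
  intro y p q hpq hp hq
  have h1 := opt_dom hp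
  have h2 := opt_dom hq
  exact hpq.eq_of_length (h1.trans h2.symm)

lemma unary_eq {a b : ℕ}
    (h : (List.replicate a true ++ [false]) <+: (List.replicate b true ++ [false])) : a = b := by
  obtain ⟨t, ht⟩ := h
  by_contra hne
  have hlen : a + 1 ≤ b + 1 := by
    have := congrArg List.length ht
    simp at this
    omega
  have hab : a < b := by omega
  have h1 : (List.replicate a true ++ [false])[a]'(by simp) = false := by
    simp
  have h2 : ((List.replicate a true ++ [false]) ++ t)[a]'(by simp)
      = (List.replicate a true ++ [false])[a]'(by simp) := by
    rw [List.getElem_append_left]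
  have h4 : ((List.replicate a true ++ [false]) ++ t)[a]'(by simp)
      = (List.replicate b true ++ [false])[a]'(by simp; omega) :=
    List.getElem_of_eq ht _
  have h3 : (List.replicate b true ++ [false])[a]'(by simp; omega) = true := by
    rw [List.getElem_append_left (by simpa using hab)]
    simp
  rw [h2, h1] at h4
  rw [h3] at h4
  exact Bool.false_ne_true h4

lemma mach3_pf : PrefixFreeMachine mach3 := by
  intro y p q hpq hp hq
  have h1 := opt_dom hp
  have h2 := opt_dom hq
  rw [h1, h2] at hpq
  have := unary_eq hpq
  rw [h1, h2, this]

lemma mem_mach1 {q : BinStr} {c : ℕ} (h : q.length = (decStr c).length) :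
    enc q ∈ mach1 q c := by
  simp [mach1, h]

lemma mem_mach3 (m : ℕ) (c : ℕ) : m ∈ mach3 (List.replicate m true ++ [false]) c := by
  have hl : (List.replicate m true ++ [false]).length - 1 = m := by simp
  simp [mach3, hl]

/-- Kraft-type counting bound for prefix-free finite sets of binary strings. -/
lemma kraft_bound : ∀ (L : ℕ) (S : Finset BinStr),
    (∀ p ∈ S, ∀ q ∈ S, p <+: q → p = q) → (∀ q ∈ S, q.length ≤ L) →
    ∑ q ∈ S, 2 ^ (L - q.length) ≤ 2 ^ L := by
  intro L
  induction L with
  | zero =>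
    intro S hpf hlen
    have hsub : S ⊆ {[]} := by
      intro q hq
      have : q.length = 0 := Nat.le_zero.mp (hlen q hq)
      simp [List.length_eq_zero_iff.mp this]
    calc ∑ q ∈ S, 2 ^ (0 - q.length) ≤ ∑ q ∈ ({[]} : Finset BinStr), 2 ^ (0 - q.length) := by
          apply Finset.sum_le_sum_of_subset hsub
    _ = 1 := by simp
    _ ≤ 2 ^ 0 := by norm_num
  | succ L ih =>
    intro S hpf hlen
    by_cases hnil : ([] : BinStr) ∈ S
    · have hS : S = {[]} := by
        apply Finset.eq_singleton_iff_unique_mem.mpr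
        refine ⟨hnil, fun q hq => ?_⟩
        exact (hpf [] hnil q hq (List.nil_prefix)).symm
      simp [hS]
    · have hne : ∀ q ∈ S, q ≠ [] := fun q hq h => hnil (h ▸ hq)
      have hbranch : ∀ b : Bool,
          ∑ q ∈ S.filter (fun q => q.head? = some b), 2 ^ (L + 1 - q.length) ≤ 2 ^ L := by
        intro b
        set Sb := S.filter (fun q => q.head? = some b) with hSb
        have hcons : ∀ q ∈ Sb, q = b :: q.tail := by
          intro q hq
          rw [hSb, Finset.mem_filter] at hq
          obtain ⟨hqS, hhead⟩ := hq
          cases q with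
          | nil => simp at hhead
          | cons hd tl =>
            simp only [List.head?_cons, Option.some.injEq] at hhead
            simp [hhead]
        have hinj : ∀ x ∈ Sb, ∀ y ∈ Sb, x.tail = y.tail → x = y := by
          intro x hx y hy hxy
          rw [hcons x hx, hcons y hy, hxy]
        have hsum : ∑ q ∈ Sb, 2 ^ (L + 1 - q.length)
            = ∑ t ∈ Sb.image List.tail, 2 ^ (L - t.length) := by
          rw [Finset.sum_image (fun x hx y hy h => hinj x hx y hy h)]
          apply Finset.sum_congr rfl
          intro q hq
          have h1 : q.length = q.tail.length + 1 := by
            rw [hcons q hq]; simp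
          rw [h1, Nat.succ_sub_succ]
        rw [hsum]
        apply ih
        · intro p hp q hq hpq
          obtain ⟨p', hp', hpt⟩ := Finset.mem_image.mp hp
          obtain ⟨q', hq', hqt⟩ := Finset.mem_image.mp hq
          have hcp : b :: p <+: b :: q := List.cons_prefix_cons.mpr ⟨rfl, hpq⟩
          have hp'' : p' = b :: p := by rw [hcons p' hp', hpt]
          have hq'' : q' = b :: q := by rw [hcons q' hq', hqt]
          have hSp : p' ∈ S := (Finset.mem_filter.mp (hSb ▸ hp')).1
          have hSq : q' ∈ S := (Finset.mem_filter.mp (hSb ▸ hq')).1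
          have := hpf p' hSp q' hSq (by rw [hp'', hq'']; exact hcp)
          rw [hp'', hq''] at this
          exact (List.cons.injEq .. ▸ this).2
        · intro t ht
          obtain ⟨q', hq', hqt⟩ := Finset.mem_image.mp ht
          have hSq : q' ∈ S := (Finset.mem_filter.mp (hSb ▸ hq')).1
          have := hlen q' hSq
          have h1 : q'.length = t.length + 1 := by rw [hcons q' hq', hqt]; simp
          omega
      have hsplit : S = S.filter (fun q => q.head? = some true)
          ∪ S.filter (fun q => q.head? = some false) := by
        ext q
        simp only [Finset.mem_union, Finset.mem_filter]
        constructor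
        · intro hq
          have h0 : q.head? = some (q.head (hne q hq)) := List.head?_eq_head _
          cases hb : q.head (hne q hq)
          · right; exact ⟨hq, by rw [h0, hb]⟩
          · left; exact ⟨hq, by rw [h0, hb]⟩
        · rintro (⟨h, _⟩ | ⟨h, _⟩) <;> exact h
      have hdisj : Disjoint (S.filter (fun q => q.head? = some true))
          (S.filter (fun q => q.head? = some false)) := by
        rw [Finset.disjoint_filter]
        intro x _ h1 h2
        rw [h1] at h2
        simp at h2
      calc ∑ q ∈ S, 2 ^ (L + 1 - q.length)
          = ∑ q ∈ S.filter (fun q => q.head? = some true), 2 ^ (L + 1 - q.length)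
            + ∑ q ∈ S.filter (fun q => q.head? = some false), 2 ^ (L + 1 - q.length) := by
            conv_lhs => rw [hsplit]
            exact Finset.sum_union hdisj
      _ ≤ 2 ^ L + 2 ^ L := Nat.add_le_add (hbranch true) (hbranch false)
      _ = 2 ^ (L + 1) := by ring

/-- cardinality version of the Kraft-type bound -/
lemma card_prefix_free (L : ℕ) (S : Finset BinStr)
    (hpf : ∀ p ∈ S, ∀ q ∈ S, p <+: q → p = q) (hlen : ∀ q ∈ S, q.length ≤ L) :
    S.card ≤ 2 ^ L := by
  calc S.card = ∑ _q ∈ S, 1 := by simp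
  _ ≤ ∑ q ∈ S, 2 ^ (L - q.length) := Finset.sum_le_sum (fun q _ => Nat.one_le_two_pow)
  _ ≤ 2 ^ L := kraft_bound L S hpf hlen

/-- the finset of binary strings of length n -/
def strFin (n : ℕ) : Finset BinStr := (Finset.univ : Finset (Fin n → Bool)).image List.ofFn

lemma mem_strFin {n : ℕ} {s : BinStr} : s ∈ strFin n ↔ s.length = n := by
  constructor
  · intro h
    obtain ⟨f, _, hf⟩ := Finset.mem_image.mp h
    rw [← hf]; simp
  · intro h
    subst h
    exact Finset.mem_image.mpr ⟨fun i => s[(i : ℕ)], Finset.mem_univ _, List.ofFn_getElem (xs := s)⟩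

lemma card_strFin (n : ℕ) : (strFin n).card = 2 ^ n := by
  rw [strFin, Finset.card_image_of_injective _ (List.ofFn_injective)]
  simp

lemma enc_inj {a b : BinStr} (h : enc a = enc b) : a = b := by
  simpa [enc] using Encodable.encode_injective h

/-- `K(y|x)` cannot be characterized as the minimal prefix-free
complexity of a program mapping `x` to `y`: for every constant `c` there are strings
`x`, `y` with `min { K(p) : U(p,x) = y } > K(y|x) + c`. -/
theorem conditional_prefix_not_min_program (U V : Machine)
    (hU : IsOptimal U) (hV : IsPrefixOptimal V) :
    ∀ c : ℕ, ∃ x y : BinStr,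
      cplx V (enc y) (enc x) + c <
        sInf {m : ℕ | ∃ p : BinStr, enc y ∈ U p (enc x) ∧ cplx0 V (enc p) = m} := by
  by_contra hcon
  push_neg at hcon
  obtain ⟨c, hc⟩ := hcon
  obtain ⟨hUp, hUuniv⟩ := hU
  obtain ⟨hVp, hVpf, hVuniv⟩ := hV
  -- shortest V-programs at condition 0 exist for every natural number
  obtain ⟨c3, hc3⟩ := hVuniv mach3 mach3_partrec mach3_pf
  have hex : ∀ m : ℕ, ∃ q : BinStr, q.length = cplx0 V m ∧ m ∈ V q 0 := by
    intro m
    obtain ⟨q, _, hq⟩ := hc3 _ 0 m (mem_mach3 m 0)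
    have hne : {n | ∃ p : BinStr, p.length = n ∧ m ∈ V p 0}.Nonempty := ⟨q.length, q, rfl, hq⟩
    exact Nat.sInf_mem hne
  choose sh shlen shmem using hex
  -- upper bound: K(y | 0^{|y|}) ≤ |y| + c0
  obtain ⟨c0, hc0⟩ := hVuniv mach1 mach1_partrec mach1_pf
  have hupper : ∀ y : BinStr, ∃ q : BinStr, q.length ≤ y.length + c0 ∧
      enc y ∈ V q (enc (List.replicate y.length false)) := by
    intro y
    have hm : enc y ∈ mach1 y (enc (List.replicate y.length false)) :=
      mem_mach1 (by simp [decStr_enc])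
    obtain ⟨q, hq1, hq2⟩ := hc0 y _ _ hm
    exact ⟨q, hq1, hq2⟩
  have hKle : ∀ y : BinStr,
      cplx V (enc y) (enc (List.replicate y.length false)) ≤ y.length + c0 := by
    intro y
    obtain ⟨q, hq1, hq2⟩ := hupper y
    exact le_trans (Nat.sInf_le ⟨q, rfl, hq2⟩) hq1
  -- the machine that runs V on condition 0 and feeds the result (as a program) into U
  set M2 : Machine := fun r x => (V r 0).bind fun e => U (decStr e) x with hM2
  have hM2p : Partrec₂ M2 := by
    have h1 : Partrec fun p : BinStr × ℕ => V p.1 0 :=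
      hVp.comp Computable.fst (Computable.const 0)
    have h2 : Partrec₂ fun (p : BinStr × ℕ) (e : ℕ) => U (decStr e) p.2 :=
      hUp.comp (decStr_primrec.to_comp.comp Computable.snd)
        (Computable.snd.comp Computable.fst)
    exact h1.bind h2
  have hM2pf : PrefixFreeMachine M2 := by
    intro y p q hpq hp hq
    have hp' : (V p 0).Dom := by
      obtain ⟨a, ha⟩ := Part.dom_iff_mem.mp hp
      obtain ⟨b, hb, _⟩ := Part.mem_bind_iff.mp ha
      exact Part.dom_iff_mem.mpr ⟨b, hb⟩
    have hq' : (V q 0).Dom := by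
      obtain ⟨a, ha⟩ := Part.dom_iff_mem.mp hq
      obtain ⟨b, hb, _⟩ := Part.mem_bind_iff.mp ha
      exact Part.dom_iff_mem.mpr ⟨b, hb⟩
    exact hVpf 0 p q hpq hp' hq'
  obtain ⟨c8, hc8⟩ := hVuniv M2 hM2p hM2pf
  -- lower bound: K(y|x) ≤ K(p) + c8 whenever U(p, x) = y
  have hlow : ∀ (p : BinStr) (x yc : ℕ), yc ∈ U p x →
      cplx V yc x ≤ cplx0 V (enc p) + c8 := by
    intro p x yc hy
    have hm : yc ∈ M2 (sh (enc p)) x := by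
      refine Part.mem_bind_iff.mpr ⟨enc p, shmem (enc p), ?_⟩
      rwa [decStr_enc]
    obtain ⟨q, hq1, hq2⟩ := hc8 _ x yc hm
    calc cplx V yc x ≤ q.length := Nat.sInf_le ⟨q, rfl, hq2⟩
      _ ≤ (sh (enc p)).length + c8 := hq1
      _ = cplx0 V (enc p) + c8 := by rw [shlen]
  -- from the contradiction hypothesis: near-optimal U-programs exist
  obtain ⟨cu, hcu⟩ := hUuniv V hVp
  have hP : ∀ y : BinStr, ∃ p : BinStr,
      enc y ∈ U p (enc (List.replicate y.length false)) ∧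
      cplx0 V (enc p) ≤ cplx V (enc y) (enc (List.replicate y.length false)) + c := by
    intro y
    obtain ⟨q, _, hq⟩ := hupper y
    obtain ⟨p0, _, hp0⟩ := hcu q _ _ hq
    have hne : {m : ℕ | ∃ p : BinStr, enc y ∈ U p (enc (List.replicate y.length false)) ∧
        cplx0 V (enc p) = m}.Nonempty := ⟨cplx0 V (enc p0), p0, hp0, rfl⟩
    obtain ⟨p, hp1, hp2⟩ := Nat.sInf_mem hne
    exact ⟨p, hp1, le_trans (le_of_eq hp2) (hc (List.replicate y.length false) y)⟩
  choose Pf hPfU hPfK using hP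
  -- shortest V-programs for y given 0^{|y|}
  have hsig : ∀ y : BinStr, ∃ q : BinStr,
      q.length = cplx V (enc y) (enc (List.replicate y.length false)) ∧
      enc y ∈ V q (enc (List.replicate y.length false)) := by
    intro y
    obtain ⟨q, _, hq⟩ := hupper y
    have hne : {n | ∃ p : BinStr, p.length = n ∧
        enc y ∈ V p (enc (List.replicate y.length false))}.Nonempty := ⟨q.length, q, rfl, hq⟩
    exact Nat.sInf_mem hne
  choose sg sglen sgmem using hsig
  -- constants
  set D := c + c0 + c8 + 1 with hD
  set J := 2 ^ (c0 + c + 1) + 1 with hJ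
  set L := J * D + c0 + c with hL
  clear_value D J L
  -- good strings of length n
  set G : ℕ → Finset BinStr := fun n =>
    (strFin n).filter (fun y => n ≤ cplx V (enc y) (enc (List.replicate n false))) with hG
  have hGlen : ∀ n, ∀ y ∈ G n, y.length = n := by
    intro n y hy
    exact mem_strFin.mp (Finset.mem_filter.mp hy).1
  have hGgood : ∀ n, ∀ y ∈ G n, n ≤ cplx V (enc y) (enc (List.replicate n false)) := by
    intro n y hy
    exact (Finset.mem_filter.mp hy).2
  -- G n has at least 2^(n-1) elements
  have hGcard : ∀ n : ℕ, 1 ≤ n → 2 ^ (n - 1) ≤ (G n).card := by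
    intro n hn
    set B := (strFin n).filter
      (fun y => ¬ (n ≤ cplx V (enc y) (enc (List.replicate n false)))) with hB
    have hsplit : (G n).card + B.card = (strFin n).card := by
      have h := Finset.card_filter_add_card_filter_not
        (s := strFin n) (p := fun y => n ≤ cplx V (enc y) (enc (List.replicate n false)))
      rw [hG, hB]
      exact h
    have hBcard : B.card ≤ 2 ^ (n - 1) := by
      have hBlen : ∀ y ∈ B, y.length = n := by
        intro y hy
        exact mem_strFin.mp (Finset.mem_filter.mp hy).1
      have hinj : ∀ x ∈ B, ∀ y ∈ B, sg x = sg y → x = y := by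
        intro x hx y hy hxy
        have h1 := sgmem x
        have h2 := sgmem y
        rw [hBlen x hx] at h1
        rw [hBlen y hy] at h2
        rw [hxy] at h1
        exact enc_inj (Part.mem_unique h1 h2)
      have hcard : B.card = (B.image sg).card := (Finset.card_image_of_injOn hinj).symm
      rw [hcard]
      apply card_prefix_free
      · intro p hp q hq hpq
        obtain ⟨x, hx, hpx⟩ := Finset.mem_image.mp hp
        obtain ⟨y, hy, hqy⟩ := Finset.mem_image.mp hq
        have h1 := sgmem x
        have h2 := sgmem y
        rw [hBlen x hx] at h1
        rw [hBlen y hy] at h2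
        rw [hpx] at h1
        rw [hqy] at h2
        exact hVpf (enc (List.replicate n false)) p q hpq
          (Part.dom_iff_mem.mpr ⟨_, h1⟩) (Part.dom_iff_mem.mpr ⟨_, h2⟩)
      · intro q hq
        obtain ⟨y, hy, hqy⟩ := Finset.mem_image.mp hq
        have h1 := sglen y
        rw [hBlen y hy] at h1
        have h2 := (Finset.mem_filter.mp hy).2
        simp only [not_le] at h2
        rw [← hqy]
        omega
    have hAcard : (strFin n).card = 2 ^ n := card_strFin n
    have hpow : 2 ^ (n - 1) + 2 ^ (n - 1) = 2 ^ n := by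
      have hn1 : n - 1 + 1 = n := by omega
      calc 2 ^ (n - 1) + 2 ^ (n - 1) = 2 ^ (n - 1) * 2 := by ring
      _ = 2 ^ (n - 1 + 1) := (pow_succ 2 (n - 1)).symm
      _ = 2 ^ n := by rw [hn1]
    omega
  -- the function mapping y to the shortest V-program (at condition 0) for enc (Pf y)
  set F : BinStr → BinStr := fun y => sh (enc (Pf y)) with hF
  -- length bounds for F y, y ∈ G n
  have hFlow : ∀ n, 1 ≤ n → ∀ y ∈ G n, n ≤ (F y).length + c8 := by
    intro n hn y hy
    have h1 := hPfU y
    rw [hGlen n y hy] at h1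
    have h2 := hlow (Pf y) _ _ h1
    have h3 := hGgood n y hy
    have h4 : (F y).length = cplx0 V (enc (Pf y)) := shlen _
    omega
  have hFhigh : ∀ n, ∀ y ∈ G n, (F y).length ≤ n + c0 + c := by
    intro n y hy
    have h1 := hPfK y
    have h2 := hKle y
    have h3 : (F y).length = cplx0 V (enc (Pf y)) := shlen _
    rw [hGlen n y hy] at h1 h2
    omega
  -- F is injective on G n
  have hFinj : ∀ n, ∀ x ∈ G n, ∀ y ∈ G n, F x = F y → x = y := by
    intro n x hx y hy hxy
    have h1 : enc (Pf x) ∈ V (F x) 0 := shmem _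
    have h2 : enc (Pf y) ∈ V (F y) 0 := shmem _
    rw [hxy] at h1
    have hPxy : Pf x = Pf y := enc_inj (Part.mem_unique h1 h2)
    have h3 := hPfU x
    have h4 := hPfU y
    rw [hGlen n x hx] at h3
    rw [hGlen n y hy] at h4
    rw [hPxy] at h3
    exact enc_inj (Part.mem_unique h3 h4)
  -- the big prefix-free family
  set Q : Finset BinStr :=
    (Finset.range J).biUnion (fun j => (G ((j + 1) * D)).image F) with hQ
  have hQmem : ∀ q ∈ Q, ∃ j, j ∈ Finset.range J ∧ ∃ y ∈ G ((j + 1) * D), F y = q := by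
    intro q hq
    obtain ⟨j, hj, hq'⟩ := Finset.mem_biUnion.mp hq
    obtain ⟨y, hy, hyq⟩ := Finset.mem_image.mp hq'
    exact ⟨j, hj, y, hy, hyq⟩
  have hD1 : 1 ≤ D := by omega
  have hjD : ∀ j, 1 ≤ (j + 1) * D := by
    intro j
    calc 1 = 1 * 1 := by ring
    _ ≤ (j + 1) * D := Nat.mul_le_mul (by omega) hD1
  -- each member of the j-th block has length in a window around (j+1)*D
  have hwin : ∀ j, ∀ q ∈ (G ((j + 1) * D)).image F,
      (j + 1) * D ≤ q.length + c8 ∧ q.length ≤ (j + 1) * D + c0 + c := by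
    intro j q hq
    obtain ⟨y, hy, hyq⟩ := Finset.mem_image.mp hq
    rw [← hyq]
    exact ⟨hFlow _ (hjD j) y hy, hFhigh _ y hy⟩
  -- the blocks are pairwise disjoint
  have hdisj : (Finset.range J : Set ℕ).PairwiseDisjoint
      (fun j => (G ((j + 1) * D)).image F) := by
    intro i _ j _ hij
    apply Finset.disjoint_left.mpr
    intro q hqi hqj
    have h1 := hwin i q hqi
    have h2 := hwin j q hqj
    rcases Nat.lt_or_ge i j with h | h
    · have : (i + 1) * D + D ≤ (j + 1) * D := by
        have : (i + 2) * D ≤ (j + 1) * D := Nat.mul_le_mul_right D (by omega)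
        calc (i + 1) * D + D = (i + 2) * D := by ring
        _ ≤ (j + 1) * D := this
      omega
    · have hij' : j < i := by omega
      have : (j + 1) * D + D ≤ (i + 1) * D := by
        have : (j + 2) * D ≤ (i + 1) * D := Nat.mul_le_mul_right D (by omega)
        calc (j + 1) * D + D = (j + 2) * D := by ring
        _ ≤ (i + 1) * D := this
      omega
  -- all members of Q halt at condition 0, so Q is prefix-free
  have hQpf : ∀ p ∈ Q, ∀ q ∈ Q, p <+: q → p = q := by
    intro p hp q hq hpq
    obtain ⟨_, _, y1, _, hy1⟩ := hQmem p hp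
    obtain ⟨_, _, y2, _, hy2⟩ := hQmem q hq
    have h1 : enc (Pf y1) ∈ V p 0 := by rw [← hy1]; exact shmem _
    have h2 : enc (Pf y2) ∈ V q 0 := by rw [← hy2]; exact shmem _
    exact hVpf 0 p q hpq (Part.dom_iff_mem.mpr ⟨_, h1⟩) (Part.dom_iff_mem.mpr ⟨_, h2⟩)
  have hQlen : ∀ q ∈ Q, q.length ≤ L := by
    intro q hq
    obtain ⟨j, hj, y, hy, hyq⟩ := hQmem q hq
    have h1 := (hwin j q (Finset.mem_image.mpr ⟨y, hy, hyq⟩)).2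
    have hjJ : j + 1 ≤ J := by
      have := Finset.mem_range.mp hj
      omega
    have h2 : (j + 1) * D ≤ J * D := Nat.mul_le_mul_right D hjJ
    rw [hL]
    omega
  -- upper bound on the weighted sum from the Kraft bound
  have hub : ∑ q ∈ Q, 2 ^ (L - q.length) ≤ 2 ^ L := kraft_bound L Q hQpf hQlen
  -- lower bound on the weighted sum
  have hlb : J * 2 ^ (J * D - 1) ≤ ∑ q ∈ Q, 2 ^ (L - q.length) := by
    rw [hQ, Finset.sum_biUnion hdisj]
    have hblock : ∀ j ∈ Finset.range J,
        2 ^ (J * D - 1) ≤ ∑ q ∈ (G ((j + 1) * D)).image F, 2 ^ (L - q.length) := by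
      intro j hj
      have hjJ : j + 1 ≤ J := by
        have := Finset.mem_range.mp hj
        omega
      have hjDJ : (j + 1) * D ≤ J * D := Nat.mul_le_mul_right D hjJ
      -- each term is at least 2 ^ (L - ((j+1)*D + c0 + c))
      have hterm : ∀ q ∈ (G ((j + 1) * D)).image F,
          2 ^ (L - ((j + 1) * D + c0 + c)) ≤ 2 ^ (L - q.length) := by
        intro q hq
        apply Nat.pow_le_pow_right (by norm_num)
        have := (hwin j q hq).2
        omega
      have hcard : 2 ^ ((j + 1) * D - 1) ≤ ((G ((j + 1) * D)).image F).card := by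
        rw [Finset.card_image_of_injOn (fun x hx y hy h => hFinj _ x hx y hy h)]
        exact hGcard _ (hjD j)
      calc 2 ^ (J * D - 1)
          = 2 ^ ((j + 1) * D - 1) * 2 ^ (L - ((j + 1) * D + c0 + c)) := by
            rw [← pow_add]
            congr 1
            have h1 : L - ((j + 1) * D + c0 + c) = J * D - (j + 1) * D := by
              rw [hL]; omega
            have h2 := hjD j
            have h3 := hjDJ
            omega
      _ ≤ ((G ((j + 1) * D)).image F).card * 2 ^ (L - ((j + 1) * D + c0 + c)) :=
            Nat.mul_le_mul_right _ hcard
      _ ≤ ∑ q ∈ (G ((j + 1) * D)).image F, 2 ^ (L - q.length) := by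
            have := Finset.card_nsmul_le_sum ((G ((j + 1) * D)).image F)
              (fun q => 2 ^ (L - q.length)) (2 ^ (L - ((j + 1) * D + c0 + c))) hterm
            simpa [smul_eq_mul] using this
    calc J * 2 ^ (J * D - 1) = ∑ _j ∈ Finset.range J, 2 ^ (J * D - 1) := by
          simp [Finset.sum_const, smul_eq_mul]
    _ ≤ ∑ j ∈ Finset.range J, ∑ q ∈ (G ((j + 1) * D)).image F, 2 ^ (L - q.length) :=
          Finset.sum_le_sum hblock
  -- the contradiction
  have hJD1 : 1 ≤ J * D := by
    calc 1 = 1 * 1 := by ring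
    _ ≤ J * D := Nat.mul_le_mul (by omega) hD1
  have hfinal : 2 ^ L < J * 2 ^ (J * D - 1) := by
    have h1 : J * 2 ^ (J * D - 1) = 2 ^ (c0 + c + 1) * 2 ^ (J * D - 1) + 2 ^ (J * D - 1) := by
      rw [hJ]; ring
    have h2 : 2 ^ (c0 + c + 1) * 2 ^ (J * D - 1) = 2 ^ L := by
      rw [← pow_add, hL]
      congr 1
      omega
    have h3 : 0 < 2 ^ (J * D - 1) := Nat.pow_pos (by norm_num)
    omega
  have := le_trans hlb hub
  omega
end

section
/- There exists a constant c such that for all binary strings x and y there exists a pair of natural numbers (k,l) with |C(x|l) − k| ≤ c and |C(y|x,k) − l| ≤ c; moreover this pair is unique up to O(1): any two pairs (k,l), (k',l') both satisfying these conditions satisfy |k − k'| ≤ c and |l − l'| ≤ c. -/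
namespace FPP

/-- number with binary digits `u` (MSB first). -/
def num (u : List Bool) : ℕ := u.foldl (fun n b => 2 * n + cond b 1 0) 0

/-- shift `y` by the signed offset encoded by `m`. -/
def shiftN (y m : ℕ) : ℕ := if m % 2 = 0 then y + m / 2 else y - (m / 2 + 1)

def pstep (s : ℕ × List Bool × List Bool) (b : Bool) : ℕ × List Bool × List Bool :=
  if s.1 = 0 then (cond b 1 2, s.2.1, s.2.2)
  else if s.1 = 1 then (0, b :: s.2.1, s.2.2)
  else (2, s.2.1, b :: s.2.2)

def parse (p : List Bool) : Option (List Bool × List Bool) :=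
  let s := p.foldl pstep (0, [], [])
  if s.1 = 2 then some (s.2.1.reverse, s.2.2.reverse) else none

def code (u q : List Bool) : List Bool := (u.flatMap fun b => [true, b]) ++ false :: q

lemma foldl_header (u : List Bool) (A R : List Bool) :
    (u.flatMap fun b => [true, b]).foldl pstep (0, A, R) = (0, u.reverse ++ A, R) := by
  induction u generalizing A with
  | nil => simp
  | cons b t ih =>
      simp only [List.flatMap_cons, List.foldl_append, List.foldl_cons, List.foldl_nil]
      show (t.flatMap fun b => [true, b]).foldl pstep (pstep (pstep (0, A, R) true) b) = _
      have h1 : pstep (0, A, R) true = (1, A, R) := by simp [pstep]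
      have h2 : pstep (1, A, R) b = (0, b :: A, R) := by simp [pstep]
      rw [h1, h2, ih]
      simp

lemma foldl_rest (q : List Bool) (A R : List Bool) :
    q.foldl pstep (2, A, R) = (2, A, q.reverse ++ R) := by
  induction q generalizing R with
  | nil => simp
  | cons b t ih =>
      simp only [List.foldl_cons]
      have h : pstep (2, A, R) b = (2, A, b :: R) := by simp [pstep]
      rw [h, ih]
      simp

lemma parse_code (u q : List Bool) : parse (code u q) = some (u, q) := by
  unfold parse code
  rw [List.foldl_append, foldl_header, List.foldl_cons]
  have h : pstep (0, u.reverse ++ [], []) false = (2, u.reverse ++ [], []) := by simp [pstep]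
  rw [h, foldl_rest]
  simp

lemma length_code (u q : List Bool) : (code u q).length = 2 * u.length + 1 + q.length := by
  induction u with
  | nil => simp [code]; omega
  | cons b t ih => simp [code] at ih ⊢; omega

lemma num_append_one (u : List Bool) (b : Bool) :
    num (u ++ [b]) = 2 * num u + cond b 1 0 := by
  simp [num, List.foldl_append]

lemma num_exists_pos (m : ℕ) (hm : 1 ≤ m) :
    ∃ u : List Bool, num u = m ∧ 2 ^ u.length ≤ 2 * m := by
  induction m using Nat.strong_induction_on with
  | _ m ih =>
    rcases Nat.lt_or_ge m 2 with h2 | h2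
    · interval_cases m
      exact ⟨[true], by simp [num], by simp⟩
    · obtain ⟨u, hu, hl⟩ := ih (m / 2) (by omega) (by omega)
      refine ⟨u ++ [decide (m % 2 = 1)], ?_, ?_⟩
      · rw [num_append_one, hu]
        rcases Nat.mod_two_eq_zero_or_one m with h | h <;> simp [h] <;> omega
      · rw [List.length_append]
        simp only [List.length_cons, List.length_nil, pow_add, pow_one]
        omega

lemma num_exists (m : ℕ) :
    ∃ u : List Bool, num u = m ∧ u.length ≤ Nat.log 2 (2 * m + 1) := by
  rcases Nat.eq_zero_or_pos m with h | h
  · exact ⟨[], by simp [num, h], by simp⟩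
  · obtain ⟨u, hu, hl⟩ := num_exists_pos m h
    refine ⟨u, hu, ?_⟩
    calc u.length = Nat.log 2 (2 ^ u.length) := (Nat.log_pow one_lt_two _).symm
      _ ≤ Nat.log 2 (2 * m + 1) := Nat.log_mono_right (by omega)

lemma shift_exists (l l' : ℕ) :
    ∃ u : List Bool, shiftN l (num u) = l' ∧
      u.length ≤ Nat.log 2 (4 * Nat.dist l l' + 1) := by
  rcases le_or_gt l l' with h | h
  · obtain ⟨u, hu, hl⟩ := num_exists (2 * (l' - l))
    refine ⟨u, ?_, ?_⟩
    · rw [hu, shiftN]; simp only [Nat.mul_mod_right]; simp; omega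
    · refine hl.trans (Nat.log_mono_right ?_)
      have : Nat.dist l l' = l' - l := Nat.dist_eq_sub_of_le h
      omega
  · obtain ⟨u, hu, hl⟩ := num_exists (2 * (l - l' - 1) + 1)
    refine ⟨u, ?_, ?_⟩
    · rw [hu, shiftN]
      have : (2 * (l - l' - 1) + 1) % 2 = 1 := by omega
      rw [if_neg (by omega)]
      omega
    · refine hl.trans (Nat.log_mono_right ?_)
      have : Nat.dist l l' = l - l' := Nat.dist_eq_sub_of_le_right (le_of_lt h)
      omega

lemma sixteen_aux (t : ℕ) : 16 * (t + 8) ≤ 2 ^ (t + 8) := by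
  induction t with
  | zero => norm_num
  | succ n ih =>
      have h : (16 : ℕ) ≤ 2 ^ (n + 8) := le_trans (show (16:ℕ) ≤ 2 ^ 8 by norm_num) (Nat.pow_le_pow_right (by norm_num) (by omega))
      calc 16 * (n + 1 + 8) = 16 * (n + 8) + 16 := by ring
        _ ≤ 2 ^ (n + 8) + 2 ^ (n + 8) := by omega
        _ = 2 ^ (n + 1 + 8) := by ring

lemma sixteen_pow (t : ℕ) : 16 * t ≤ 2 ^ t + 48 := by
  rcases Nat.lt_or_ge t 8 with h | h
  · interval_cases t <;> norm_num
  · obtain ⟨s, rfl⟩ := Nat.exists_eq_add_of_le h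
    have := sixteen_aux s
    calc 16 * (8 + s) = 16 * (s + 8) := by ring
      _ ≤ 2 ^ (s + 8) := this
      _ ≤ 2 ^ (8 + s) + 48 := by rw [Nat.add_comm 8 s]; omega

lemma sixteen_log (n : ℕ) : 16 * Nat.log 2 n ≤ n + 48 := by
  rcases Nat.eq_zero_or_pos n with h | h
  · simp [h]
  · have h1 := sixteen_pow (Nat.log 2 n)
    have h2 : 2 ^ Nat.log 2 n ≤ n := Nat.pow_log_le_self 2 (by omega)
    omega

lemma ivt (h : ℕ → ℕ) (c : ℕ) (hstep : ∀ n, (h n : ℤ) ≤ (h (n + 1) : ℤ) + c)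
    (N : ℕ) (hN : h N < N) : ∃ l : ℕ, (l : ℤ) ≤ (h l : ℤ) ∧ (h l : ℤ) ≤ (l : ℤ) + c := by
  classical
  have hex : ∃ n, h n < n := ⟨N, hN⟩
  have hn : h (Nat.find hex) < Nat.find hex := Nat.find_spec hex
  rcases Nat.eq_zero_or_pos (Nat.find hex) with h0 | h0
  · omega
  · obtain ⟨m, hm⟩ : ∃ m, Nat.find hex = m + 1 := ⟨Nat.find hex - 1, by omega⟩
    have hmin : ¬ h m < m := Nat.find_min hex (by omega)
    have := hstep m
    refine ⟨m, by omega, ?_⟩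
    rw [hm] at hn
    omega


lemma primrec_num : Primrec num := by
  have h : Primrec₂ fun (_ : List Bool) (sb : ℕ × Bool) => 2 * sb.1 + cond sb.2 1 0 :=
    Primrec.to₂ <|
      Primrec.nat_add.comp
        (Primrec.nat_mul.comp (Primrec.const 2) (Primrec.fst.comp Primrec.snd))
        (Primrec.cond (Primrec.snd.comp Primrec.snd) (Primrec.const 1) (Primrec.const 0))
  exact (Primrec.list_foldl Primrec.id (Primrec.const 0) h).of_eq fun l => rfl

lemma primrec_shiftN : Primrec₂ shiftN := by
  have hc : PrimrecPred fun p : ℕ × ℕ => p.2 % 2 = 0 :=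
    PrimrecRel.comp Primrec.eq (Primrec.nat_mod.comp Primrec.snd (Primrec.const 2))
      (Primrec.const 0)
  have ht : Primrec fun p : ℕ × ℕ => p.1 + p.2 / 2 :=
    Primrec.nat_add.comp Primrec.fst (Primrec.nat_div.comp Primrec.snd (Primrec.const 2))
  have he : Primrec fun p : ℕ × ℕ => p.1 - (p.2 / 2 + 1) :=
    Primrec.nat_sub.comp Primrec.fst
      (Primrec.succ.comp (Primrec.nat_div.comp Primrec.snd (Primrec.const 2)))
  exact Primrec.to₂ (Primrec.ite hc ht he)

/-- state type of the parser -/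
local notation "S" => (ℕ × List Bool × List Bool)

lemma primrec_pstep : Primrec₂ pstep := by
  have m : Primrec fun p : S × Bool => p.1.1 := Primrec.fst.comp Primrec.fst
  have a1 : Primrec fun p : S × Bool => p.1.2.1 :=
    Primrec.fst.comp (Primrec.snd.comp Primrec.fst)
  have a2 : Primrec fun p : S × Bool => p.1.2.2 :=
    Primrec.snd.comp (Primrec.snd.comp Primrec.fst)
  have b : Primrec fun p : S × Bool => p.2 := Primrec.snd
  have h0 : PrimrecPred fun p : S × Bool => p.1.1 = 0 :=
    PrimrecRel.comp Primrec.eq m (Primrec.const 0)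
  have h1 : PrimrecPred fun p : S × Bool => p.1.1 = 1 :=
    PrimrecRel.comp Primrec.eq m (Primrec.const 1)
  have br1 : Primrec fun p : S × Bool => ((cond p.2 1 2 : ℕ), p.1.2.1, p.1.2.2) :=
    Primrec.pair (Primrec.cond b (Primrec.const 1) (Primrec.const 2)) (Primrec.pair a1 a2)
  have br2 : Primrec fun p : S × Bool => ((0 : ℕ), p.2 :: p.1.2.1, p.1.2.2) :=
    Primrec.pair (Primrec.const 0) (Primrec.pair (Primrec.list_cons.comp b a1) a2)
  have br3 : Primrec fun p : S × Bool => ((2 : ℕ), p.1.2.1, p.2 :: p.1.2.2) :=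
    Primrec.pair (Primrec.const 2) (Primrec.pair a1 (Primrec.list_cons.comp b a2))
  exact Primrec.to₂ (Primrec.ite h0 br1 (Primrec.ite h1 br2 br3))

lemma primrec_parse : Primrec parse := by
  have hfold : Primrec fun p : List Bool => p.foldl pstep ((0 : ℕ), ([] : List Bool), ([] : List Bool)) := by
    have h : Primrec₂ fun (_ : List Bool) (sb : S × Bool) => pstep sb.1 sb.2 :=
      Primrec.to₂ (primrec_pstep.comp (Primrec.fst.comp Primrec.snd) (Primrec.snd.comp Primrec.snd))
    exact (Primrec.list_foldl Primrec.id (Primrec.const _) h).of_eq fun l => rfl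
  have hfin : Primrec fun s : S =>
      if s.1 = 2 then some (s.2.1.reverse, s.2.2.reverse) else none := by
    have hc : PrimrecPred fun s : S => s.1 = 2 :=
      PrimrecRel.comp Primrec.eq Primrec.fst (Primrec.const 2)
    have hsome : Primrec fun s : S => some (s.2.1.reverse, s.2.2.reverse) :=
      Primrec.option_some.comp
        (Primrec.pair (Primrec.list_reverse.comp (Primrec.fst.comp Primrec.snd))
          (Primrec.list_reverse.comp (Primrec.snd.comp Primrec.snd)))
    exact Primrec.ite hc hsome (Primrec.const none)
  exact (hfin.comp hfold).of_eq fun p => rfl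

/-- Machine shifting the condition. -/
def V1 (U : Machine) : Machine := fun p y =>
  (parse p : Part (List Bool × List Bool)).bind fun s => U s.2 (shiftN y (num s.1))

/-- Machine shifting the second component of the (paired) condition. -/
def V2 (U : Machine) : Machine := fun p y =>
  (parse p : Part (List Bool × List Bool)).bind fun s =>
    U s.2 (Nat.pair y.unpair.1 (shiftN y.unpair.2 (num s.1)))

lemma partrec_V1 {U : Machine} (hU : Partrec₂ U) : Partrec₂ (V1 U) := by
  have hp : Partrec fun a : BinStr × ℕ => (parse a.1 : Part (List Bool × List Bool)) :=
    Computable.ofOption (primrec_parse.comp Primrec.fst).to_comp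
  have hg : Partrec₂ fun (a : BinStr × ℕ) (s : List Bool × List Bool) =>
      U s.2 (shiftN a.2 (num s.1)) :=
    hU.comp (Primrec.snd.comp Primrec.snd).to_comp
      ((primrec_shiftN.comp (Primrec.snd.comp Primrec.fst)
        (primrec_num.comp (Primrec.fst.comp Primrec.snd))).to_comp)
  exact hp.bind hg

lemma partrec_V2 {U : Machine} (hU : Partrec₂ U) : Partrec₂ (V2 U) := by
  have hp : Partrec fun a : BinStr × ℕ => (parse a.1 : Part (List Bool × List Bool)) :=
    Computable.ofOption (primrec_parse.comp Primrec.fst).to_comp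
  have hg : Partrec₂ fun (a : BinStr × ℕ) (s : List Bool × List Bool) =>
      U s.2 (Nat.pair a.2.unpair.1 (shiftN a.2.unpair.2 (num s.1))) :=
    hU.comp (Primrec.snd.comp Primrec.snd).to_comp
      ((Primrec₂.natPair.comp
          (Primrec.fst.comp (Primrec.unpair.comp (Primrec.snd.comp Primrec.fst)))
          (primrec_shiftN.comp
            (Primrec.snd.comp (Primrec.unpair.comp (Primrec.snd.comp Primrec.fst)))
            (primrec_num.comp (Primrec.fst.comp Primrec.snd)))).to_comp)
  exact hp.bind hg


lemma cplx_le {U : Machine} {x y : ℕ} {p : BinStr} (h : x ∈ U p y) : cplx U x y ≤ p.length :=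
  Nat.sInf_le ⟨p, rfl, h⟩

lemma cplx_spec {U : Machine} {x y : ℕ} (h : ∃ p : BinStr, x ∈ U p y) :
    ∃ p : BinStr, p.length = cplx U x y ∧ x ∈ U p y := by
  obtain ⟨p, hp⟩ := h
  exact Nat.sInf_mem (⟨p.length, p, rfl, hp⟩ :
    {n | ∃ q : BinStr, q.length = n ∧ x ∈ U q y}.Nonempty)

lemma exists_print {U : Machine} (hU : IsOptimal U) :
    ∃ cP : ℕ, ∀ (a : BinStr) (y : ℕ),
      ∃ q : BinStr, q.length ≤ a.length + cP ∧ enc a ∈ U q y := by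
  have hV : Partrec₂ (fun (p : BinStr) (_ : ℕ) => (Part.some (enc p) : Part ℕ)) := by
    have h : Computable fun a : BinStr × ℕ => enc a.1 :=
      Computable.encode.comp Computable.fst
    exact h.partrec.of_eq fun a => rfl
  obtain ⟨c, hc⟩ := hU.2 _ hV
  exact ⟨c, fun a y => hc a y (enc a) (Part.mem_some _)⟩

lemma shift1 {U : Machine} (hU : IsOptimal U) :
    ∃ c : ℕ, ∀ x l l' : ℕ, (∃ p : BinStr, x ∈ U p l') →
      cplx U x l ≤ cplx U x l' + 2 * Nat.log 2 (4 * Nat.dist l l' + 1) + c := by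
  obtain ⟨c, hc⟩ := hU.2 (V1 U) (partrec_V1 hU.1)
  refine ⟨c + 1, fun x l l' hne => ?_⟩
  obtain ⟨p, hp, hxp⟩ := cplx_spec hne
  obtain ⟨u, hu, hul⟩ := shift_exists l l'
  have hmem : x ∈ V1 U (code u p) l := by
    show x ∈ (parse (code u p) : Part (List Bool × List Bool)).bind
      fun s => U s.2 (shiftN l (num s.1))
    rw [parse_code]
    refine Part.mem_bind_iff.2 ⟨(u, p), by simp, ?_⟩
    simpa [hu] using hxp
  obtain ⟨q, hq, hxq⟩ := hc _ _ _ hmem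
  have h1 := cplx_le hxq
  have h2 := length_code u p
  omega

lemma shift2 {U : Machine} (hU : IsOptimal U) :
    ∃ c : ℕ, ∀ x z k k' : ℕ, (∃ p : BinStr, x ∈ U p (Nat.pair z k')) →
      cplx U x (Nat.pair z k) ≤
        cplx U x (Nat.pair z k') + 2 * Nat.log 2 (4 * Nat.dist k k' + 1) + c := by
  obtain ⟨c, hc⟩ := hU.2 (V2 U) (partrec_V2 hU.1)
  refine ⟨c + 1, fun x z k k' hne => ?_⟩
  obtain ⟨p, hp, hxp⟩ := cplx_spec hne
  obtain ⟨u, hu, hul⟩ := shift_exists k k'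
  have hmem : x ∈ V2 U (code u p) (Nat.pair z k) := by
    show x ∈ (parse (code u p) : Part (List Bool × List Bool)).bind
      fun s => U s.2 (Nat.pair (Nat.pair z k).unpair.1
        (shiftN (Nat.pair z k).unpair.2 (num s.1)))
    rw [parse_code]
    refine Part.mem_bind_iff.2 ⟨(u, p), by simp, ?_⟩
    simpa [Nat.unpair_pair, hu] using hxp
  obtain ⟨q, hq, hxq⟩ := hc _ _ _ hmem
  have h1 := cplx_le hxq
  have h2 := length_code u p
  omega

end FPP

/-- For all `x`, `y` there is a pair `(k,l)` with `C(x|l) = k + O(1)`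
and `C(y|x,k) = l + O(1)`, and this pair is unique up to `O(1)`. -/
theorem fixed_point_pair (U : Machine) (hU : IsOptimal U) :
    (∃ c : ℕ, ∀ x y : BinStr, ∃ k l : ℕ,
        |(cplx U (enc x) l : ℤ) - (k : ℤ)| ≤ (c : ℤ) ∧
        |(cplx U (enc y) (Nat.pair (enc x) k) : ℤ) - (l : ℤ)| ≤ (c : ℤ)) ∧
    (∀ c₀ : ℕ, ∃ c : ℕ, ∀ (x y : BinStr) (k l k' l' : ℕ),
        |(cplx U (enc x) l : ℤ) - (k : ℤ)| ≤ (c₀ : ℤ) →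
        |(cplx U (enc y) (Nat.pair (enc x) k) : ℤ) - (l : ℤ)| ≤ (c₀ : ℤ) →
        |(cplx U (enc x) l' : ℤ) - (k' : ℤ)| ≤ (c₀ : ℤ) →
        |(cplx U (enc y) (Nat.pair (enc x) k') : ℤ) - (l' : ℤ)| ≤ (c₀ : ℤ) →
        |(k : ℤ) - (k' : ℤ)| ≤ (c : ℤ) ∧ |(l : ℤ) - (l' : ℤ)| ≤ (c : ℤ)) := by
  obtain ⟨cP, hP⟩ := FPP.exists_print hU
  obtain ⟨c1, h1⟩ := FPP.shift1 hU
  obtain ⟨c2, h2⟩ := FPP.shift2 hU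
  have hhalt : ∀ (a : BinStr) (w : ℕ), ∃ p : BinStr, enc a ∈ U p w := by
    intro a w; obtain ⟨q, _, hq⟩ := hP a w; exact ⟨q, hq⟩
  have hbd : ∀ (a : BinStr) (w : ℕ), cplx U (enc a) w ≤ a.length + cP := by
    intro a w; obtain ⟨q, hq1, hq2⟩ := hP a w
    exact le_trans (FPP.cplx_le hq2) hq1
  constructor
  · -- existence
    refine ⟨4 * c1 + c2 + 80, fun x y => ?_⟩
    have hstep : ∀ n : ℕ,
        ((cplx U (enc y) (Nat.pair (enc x) (cplx U (enc x) n)) : ℤ)) ≤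
        ((cplx U (enc y) (Nat.pair (enc x) (cplx U (enc x) (n + 1))) : ℤ)) +
          (4 * c1 + c2 + 80 : ℕ) := by
      intro n
      have hfa : cplx U (enc x) (n + 1) ≤
          cplx U (enc x) n + 2 * Nat.log 2 (4 * Nat.dist (n + 1) n + 1) + c1 :=
        h1 (enc x) (n + 1) n (hhalt x n)
      have hfb : cplx U (enc x) n ≤
          cplx U (enc x) (n + 1) + 2 * Nat.log 2 (4 * Nat.dist n (n + 1) + 1) + c1 :=
        h1 (enc x) n (n + 1) (hhalt x (n + 1))
      have hd1 : (4 * Nat.dist (n + 1) n + 1) = 5 := by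
        have : Nat.dist (n + 1) n = (n + 1 - n) + (n - (n + 1)) := rfl
        omega
      have hd2 : (4 * Nat.dist n (n + 1) + 1) = 5 := by
        have : Nat.dist n (n + 1) = (n - (n + 1)) + ((n + 1) - n) := rfl
        omega
      rw [hd1] at hfa
      rw [hd2] at hfb
      have hL5 : 16 * Nat.log 2 5 ≤ 53 := FPP.sixteen_log 5
      have hg : cplx U (enc y) (Nat.pair (enc x) (cplx U (enc x) n)) ≤
          cplx U (enc y) (Nat.pair (enc x) (cplx U (enc x) (n + 1))) +
            2 * Nat.log 2 (4 * Nat.dist (cplx U (enc x) n) (cplx U (enc x) (n + 1)) + 1) + c2 :=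
        h2 (enc y) (enc x) _ _ (hhalt y _)
      have hmono : Nat.log 2 (4 * Nat.dist (cplx U (enc x) n) (cplx U (enc x) (n + 1)) + 1) ≤
          Nat.log 2 (4 * (c1 + 7) + 1) := by
        apply Nat.log_mono_right
        have hdd : Nat.dist (cplx U (enc x) n) (cplx U (enc x) (n + 1)) =
            (cplx U (enc x) n - cplx U (enc x) (n + 1)) +
            (cplx U (enc x) (n + 1) - cplx U (enc x) n) := rfl
        omega
      have hC := FPP.sixteen_log (4 * (c1 + 7) + 1)
      omega
    have hNlt : (fun n => cplx U (enc y) (Nat.pair (enc x) (cplx U (enc x) n)))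
        (y.length + cP + 1) < y.length + cP + 1 := by
      simp only
      have := hbd y (Nat.pair (enc x) (cplx U (enc x) (y.length + cP + 1)))
      omega
    obtain ⟨l, hl1, hl2⟩ := FPP.ivt
      (fun n => cplx U (enc y) (Nat.pair (enc x) (cplx U (enc x) n)))
      (4 * c1 + c2 + 80) hstep (y.length + cP + 1) hNlt
    refine ⟨cplx U (enc x) l, l, by simp; positivity, ?_⟩
    rw [abs_le]
    constructor <;> omega
  · -- uniqueness
    intro c₀
    refine ⟨2 * c1 + 2 * c2 + 8 * c₀ + 40, fun x y k l k' l' hk hl hk' hl' => ?_⟩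
    rw [abs_le] at hk hl hk' hl'
    have a1 : cplx U (enc x) l ≤
        cplx U (enc x) l' + 2 * Nat.log 2 (4 * Nat.dist l l' + 1) + c1 :=
      h1 (enc x) l l' (hhalt x l')
    have a2 : cplx U (enc x) l' ≤
        cplx U (enc x) l + 2 * Nat.log 2 (4 * Nat.dist l' l + 1) + c1 :=
      h1 (enc x) l' l (hhalt x l)
    rw [Nat.dist_comm l' l] at a2
    have b1 : cplx U (enc y) (Nat.pair (enc x) k) ≤
        cplx U (enc y) (Nat.pair (enc x) k') + 2 * Nat.log 2 (4 * Nat.dist k k' + 1) + c2 :=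
      h2 (enc y) (enc x) k k' (hhalt y _)
    have b2 : cplx U (enc y) (Nat.pair (enc x) k') ≤
        cplx U (enc y) (Nat.pair (enc x) k) + 2 * Nat.log 2 (4 * Nat.dist k' k + 1) + c2 :=
      h2 (enc y) (enc x) k' k (hhalt y _)
    rw [Nat.dist_comm k' k] at b2
    have ed : Nat.dist k k' = (k - k') + (k' - k) := rfl
    have edl : Nat.dist l l' = (l - l') + (l' - l) := rfl
    have hkk : Nat.dist k k' ≤ 2 * Nat.log 2 (4 * Nat.dist l l' + 1) + c1 + 2 * c₀ := by
      omega
    have ht2b : 16 * Nat.log 2 (4 * Nat.dist k k' + 1) ≤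
        8 * Nat.log 2 (4 * Nat.dist l l' + 1) + 4 * (c1 + 2 * c₀) + 49 := by
      have hm : Nat.log 2 (4 * Nat.dist k k' + 1) ≤
          Nat.log 2 (4 * (2 * Nat.log 2 (4 * Nat.dist l l' + 1) + c1 + 2 * c₀) + 1) :=
        Nat.log_mono_right (by omega)
      have := FPP.sixteen_log
        (4 * (2 * Nat.log 2 (4 * Nat.dist l l' + 1) + c1 + 2 * c₀) + 1)
      omega
    have hll : Nat.dist l l' ≤ 2 * Nat.log 2 (4 * Nat.dist k k' + 1) + c2 + 2 * c₀ := by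
      omega
    have ht1b : 16 * Nat.log 2 (4 * Nat.dist l l' + 1) ≤ 4 * Nat.dist l l' + 49 := by
      have := FPP.sixteen_log (4 * Nat.dist l l' + 1)
      omega
    constructor <;> (rw [abs_le]; constructor <;> omega)
end

section
/- There exists a constant c such that for all natural numbers i and i': the conditional plain complexities satisfy C(i|i') ≤ log₂(|i − i'| + 1) + c and C(i'|i) ≤ log₂(|i − i'| + 1) + c; consequently, the map F: (k,l) ↦ (C(x|l), C(y|x,k)) (for fixed strings x, y) sends pairs at geometric distance d in ℤ² to pairs at distance O(log d), which yields the existence and O(1)-uniqueness of a fixed point of F. -/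
namespace KolmoAux

/-- Value of a bit string, as `1` followed by the bits read as a binary number. -/
def gval (s : List Bool) : ℕ := s.foldr (fun b n => 2 * n + cond b 1 0) 1

lemma gval_cons (b : Bool) (s : List Bool) :
    gval (b :: s) = 2 * gval s + cond b 1 0 := rfl

lemma gval_exists (d : ℕ) :
    ∃ s : List Bool, s.length = Nat.log 2 (d + 1) ∧ gval s = d + 1 := by
  induction d using Nat.strong_induction_on with
  | _ d ih =>
    rcases Nat.eq_zero_or_pos d with h0 | h0
    · subst h0; exact ⟨[], by simp, rfl⟩
    · have h2 : 2 ≤ d + 1 := by omega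
      obtain ⟨d', hd'⟩ : ∃ d', (d + 1) / 2 = d' + 1 := ⟨(d + 1) / 2 - 1, by omega⟩
      have hlt : d' < d := by omega
      obtain ⟨s', hl', hv'⟩ := ih d' hlt
      refine ⟨decide ((d + 1) % 2 = 1) :: s', ?_, ?_⟩
      · have hlog := Nat.log_div_base 2 (d + 1)
        have hpos := Nat.log_pos (by norm_num : (1:ℕ) < 2) h2
        simp only [List.length_cons, hl', ← hd', hlog]
        omega
      · rw [gval_cons, hv', ← hd']
        rcases Nat.mod_two_eq_zero_or_one (d + 1) with h | h <;> simp [h] <;> omega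

lemma gval_primrec : Primrec gval := by
  have hh : Primrec₂ fun (_ : List Bool) (p : Bool × ℕ) => 2 * p.2 + cond p.1 1 0 :=
    Primrec.to₂ <|
      Primrec.nat_add.comp
        (Primrec.nat_mul.comp (Primrec.const 2) (Primrec.snd.comp Primrec.snd))
        (Primrec.cond (Primrec.fst.comp Primrec.snd) (Primrec.const 1) (Primrec.const 0))
  exact (Primrec.list_foldr Primrec.id (Primrec.const 1) hh).of_eq fun l => rfl

lemma drop_iterate : ∀ (n : ℕ) (l : List Bool), List.tail^[n] l = l.drop n := by
  intro n
  induction n with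
  | zero => simp
  | succ n ih =>
    intro l
    rw [Function.iterate_succ_apply', ih l, ← List.drop_one, List.drop_drop]

lemma drop_primrec : Primrec₂ (fun (l : List Bool) (n : ℕ) => l.drop n) := by
  have h := Primrec.nat_iterate (f := fun p : List Bool × ℕ => p.2)
    (g := fun p : List Bool × ℕ => p.1)
    (h := fun (_ : List Bool × ℕ) (l : List Bool) => l.tail)
    Primrec.snd Primrec.fst (Primrec.list_tail.comp Primrec.snd).to₂
  exact Primrec.to₂ (h.of_eq fun p => drop_iterate p.2 p.1)

lemma take_primrec : Primrec₂ (fun (l : List Bool) (n : ℕ) => l.take n) := by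
  have h : Primrec fun p : List Bool × ℕ => (p.1.reverse.drop (p.1.length - p.2)).reverse :=
    Primrec.list_reverse.comp <|
      drop_primrec.comp (Primrec.list_reverse.comp Primrec.fst)
        (Primrec.nat_sub.comp (Primrec.list_length.comp Primrec.fst) Primrec.snd)
  have h2 : ∀ p : List Bool × ℕ,
      (p.1.reverse.drop (p.1.length - p.2)).reverse = p.1.take p.2 := by
    intro p
    rw [List.reverse_drop, List.reverse_reverse, List.length_reverse]
    rcases le_total p.2 p.1.length with h | h
    · congr 1
      omega
    · rw [List.take_of_length_le (by omega), List.take_of_length_le h]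
  exact Primrec.to₂ (h.of_eq h2)


/-- Plain shift machine helper: program is sign bit followed by the binary
representation of the shift amount. -/
def shv (p : List Bool) (y : ℕ) : ℕ :=
  bif p.headI then y + (gval p.tail - 1) else y - (gval p.tail - 1)

lemma shv_primrec : Primrec₂ shv := by
  have hd : Primrec fun p : List Bool × ℕ => gval p.1.tail - 1 :=
    Primrec.nat_sub.comp
      (gval_primrec.comp (Primrec.list_tail.comp Primrec.fst)) (Primrec.const 1)
  exact Primrec.to₂ <|
    Primrec.cond (Primrec.list_headI.comp Primrec.fst)
      (Primrec.nat_add.comp Primrec.snd hd) (Primrec.nat_sub.comp Primrec.snd hd)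

/-- Parsing of a composite program `b :: (unary length ++ [false] ++ s ++ q)`. -/
def plen (p : List Bool) : ℕ := p.tail.idxOf false

def pbody (p : List Bool) : List Bool := p.tail.drop (plen p + 1)

def pspec (p : List Bool) : List Bool := (pbody p).take (plen p)

def pprog (p : List Bool) : List Bool := (pbody p).drop (plen p)

def pshift (p : List Bool) (y : ℕ) : ℕ :=
  bif p.headI then y + (gval (pspec p) - 1) else y - (gval (pspec p) - 1)

lemma plen_primrec : Primrec plen :=
  Primrec.list_idxOf.comp (Primrec.const false) Primrec.list_tail

lemma pbody_primrec : Primrec pbody :=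
  drop_primrec.comp Primrec.list_tail (Primrec.succ.comp plen_primrec)

lemma pspec_primrec : Primrec pspec := take_primrec.comp pbody_primrec plen_primrec

lemma pprog_primrec : Primrec pprog := drop_primrec.comp pbody_primrec plen_primrec

lemma pshift_primrec : Primrec₂ pshift := by
  have hd : Primrec fun p : List Bool × ℕ => gval (pspec p.1) - 1 :=
    Primrec.nat_sub.comp
      (gval_primrec.comp (pspec_primrec.comp Primrec.fst)) (Primrec.const 1)
  exact Primrec.to₂ <|
    Primrec.cond (Primrec.list_headI.comp Primrec.fst)
      (Primrec.nat_add.comp Primrec.snd hd) (Primrec.nat_sub.comp Primrec.snd hd)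

/-- The composite program. -/
def mkProg (b : Bool) (s q : List Bool) : List Bool :=
  b :: (List.replicate s.length true ++ false :: (s ++ q))

lemma indexOf_replicate (n : ℕ) (t : List Bool) :
    (List.replicate n true ++ false :: t).idxOf false = n := by
  induction n with
  | zero => simp
  | succ n ih => rw [List.replicate_succ]; simpa using ih

lemma mkProg_length (b : Bool) (s q : List Bool) :
    (mkProg b s q).length = 2 * s.length + 2 + q.length := by
  simp [mkProg]; omega

lemma mkProg_headI (b : Bool) (s q : List Bool) : (mkProg b s q).headI = b := rfl

lemma mkProg_plen (b : Bool) (s q : List Bool) : plen (mkProg b s q) = s.length :=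
  indexOf_replicate _ _

lemma mkProg_pbody (b : Bool) (s q : List Bool) : pbody (mkProg b s q) = s ++ q := by
  rw [pbody, mkProg_plen]
  show (List.replicate s.length true ++ false :: (s ++ q)).drop (s.length + 1) = s ++ q
  rw [show List.replicate s.length true ++ false :: (s ++ q)
      = (List.replicate s.length true ++ [false]) ++ (s ++ q) by simp]
  rw [show s.length + 1 = (List.replicate s.length true ++ [false]).length by simp]
  exact List.drop_left

lemma mkProg_pspec (b : Bool) (s q : List Bool) : pspec (mkProg b s q) = s := by
  rw [pspec, mkProg_pbody, mkProg_plen]; exact List.take_left ..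

lemma mkProg_pprog (b : Bool) (s q : List Bool) : pprog (mkProg b s q) = q := by
  rw [pprog, mkProg_pbody, mkProg_plen]; exact List.drop_left ..

lemma mkProg_pshift {d y y' : ℕ} (s q : List Bool) (hs : gval s = d + 1)
    (h : Nat.dist y y' = d) :
    pshift (mkProg (decide (y ≤ y')) s q) y = y' := by
  rw [pshift, mkProg_headI, mkProg_pspec, hs]
  rcases le_total y y' with hy | hy
  · have := Nat.dist_eq_sub_of_le hy
    simp [hy]
    omega
  · have := Nat.dist_eq_sub_of_le_right hy
    rcases eq_or_lt_of_le hy with hy' | hy'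
    · subst hy'
      simp
      omega
    · have hne : ¬ (y ≤ y') := by omega
      simp [hne]
      omega


/-- The shift machine. -/
def V1 : Machine := fun p y => Part.some (shv p y)

lemma V1_partrec : Partrec₂ V1 :=
  (shv_primrec.to_comp).partrec₂

/-- Machine translating programs: shift the condition, then run `U`. -/
def W1 (U : Machine) : Machine := fun p l => U (pprog p) (pshift p l)

lemma W1_partrec {U : Machine} (hU : Partrec₂ U) : Partrec₂ (W1 U) :=
  hU.comp (pprog_primrec.to_comp.comp Computable.fst) pshift_primrec.to_comp

/-- Machine shifting the second component of a paired condition. -/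
def W2 (U : Machine) : Machine := fun p m =>
  U (pprog p) (Nat.pair m.unpair.1 (pshift p m.unpair.2))

lemma W2_partrec {U : Machine} (hU : Partrec₂ U) : Partrec₂ (W2 U) := by
  have hc : Computable fun q : BinStr × ℕ =>
      Nat.pair q.2.unpair.1 (pshift q.1 q.2.unpair.2) :=
    Primrec.to_comp <| Primrec₂.natPair.comp
      (Primrec.fst.comp (Primrec.unpair.comp Primrec.snd))
      (pshift_primrec.comp Primrec.fst
        (Primrec.snd.comp (Primrec.unpair.comp Primrec.snd)))
  exact hU.comp (pprog_primrec.to_comp.comp Computable.fst) hc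

section cplxFacts

variable {U : Machine} (hU : IsOptimal U)

lemma cplx_le {x y : ℕ} {p : BinStr} (h : x ∈ U p y) : cplx U x y ≤ p.length :=
  Nat.sInf_le ⟨p, rfl, h⟩

include hU in
lemma exists_prog (x y : ℕ) : ∃ p : BinStr, x ∈ U p y := by
  obtain ⟨c, hc⟩ := hU.2 (fun _ _ => Part.some x) (Partrec.const' (Part.some x))
  obtain ⟨q, _, hq⟩ := hc [] y x (Part.mem_some x)
  exact ⟨q, hq⟩

include hU in
lemma cplx_spec (x y : ℕ) : ∃ p : BinStr, p.length = cplx U x y ∧ x ∈ U p y := by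
  obtain ⟨p, hp⟩ := exists_prog hU x y
  have hne : {n | ∃ p : BinStr, p.length = n ∧ x ∈ U p y}.Nonempty :=
    ⟨p.length, p, rfl, hp⟩
  exact Nat.sInf_mem hne

include hU in
lemma cplx_bounded (x : ℕ) : ∃ c : ℕ, ∀ y : ℕ, cplx U x y ≤ c := by
  obtain ⟨c, hc⟩ := hU.2 (fun _ _ => Part.some x) (Partrec.const' (Part.some x))
  refine ⟨c, fun y => ?_⟩
  obtain ⟨q, hql, hq⟩ := hc [] y x (Part.mem_some x)
  simpa using (cplx_le hq).trans hql

include hU in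
/-- Statement 19, first part. -/
lemma cplx_nearby : ∃ c : ℕ, ∀ i i' : ℕ,
    cplx U i i' ≤ Nat.log 2 (Nat.dist i i' + 1) + c := by
  obtain ⟨c, hc⟩ := hU.2 V1 V1_partrec
  refine ⟨c + 1, fun i i' => ?_⟩
  obtain ⟨s, hsl, hsv⟩ := gval_exists (Nat.dist i i')
  set b : Bool := decide (i' ≤ i) with hb
  have hval : shv (b :: s) i' = i := by
    have hrw : shv (b :: s) i' =
        bif b then i' + (gval s - 1) else i' - (gval s - 1) := rfl
    rw [hrw, hsv]
    rcases lt_or_ge i i' with hy | hy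
    · have hb' : b = false := by simp [hb]; omega
      have hd := Nat.dist_eq_sub_of_le (le_of_lt hy)
      rw [hb', cond_false]; omega
    · have hb' : b = true := by simp [hb]; omega
      have hd := Nat.dist_eq_sub_of_le_right hy
      rw [hb', cond_true]; omega
  have hmem : i ∈ V1 (b :: s) i' := by
    rw [V1]
    exact Part.mem_some_iff.2 hval.symm
  obtain ⟨q, hql, hq⟩ := hc (b :: s) i' i hmem
  calc cplx U i i' ≤ q.length := cplx_le hq
    _ ≤ (b :: s).length + c := hql
    _ = Nat.log 2 (Nat.dist i i' + 1) + (c + 1) := by simp [hsl]; omega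

include hU in
/-- Translation bound for plain conditions. -/
lemma cplx_translate : ∃ c : ℕ, ∀ x l l' : ℕ,
    cplx U x l ≤ cplx U x l' + (2 * Nat.log 2 (Nat.dist l l' + 1) + c) := by
  obtain ⟨c, hc⟩ := hU.2 (W1 U) (W1_partrec hU.1)
  refine ⟨c + 2, fun x l l' => ?_⟩
  obtain ⟨q, hql, hq⟩ := cplx_spec hU x l'
  obtain ⟨s, hsl, hsv⟩ := gval_exists (Nat.dist l l')
  have hmem : x ∈ W1 U (mkProg (decide (l ≤ l')) s q) l := by
    rw [W1, mkProg_pprog, mkProg_pshift s q hsv rfl]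
    exact hq
  obtain ⟨q', hq'l, hq'⟩ := hc _ l x hmem
  calc cplx U x l ≤ q'.length := cplx_le hq'
    _ ≤ (mkProg (decide (l ≤ l')) s q).length + c := hq'l
    _ = cplx U x l' + (2 * Nat.log 2 (Nat.dist l l' + 1) + (c + 2)) := by
        rw [mkProg_length, hsl, hql]; omega

include hU in
/-- Translation bound for paired conditions. -/
lemma cplx_translate_pair : ∃ c : ℕ, ∀ x a k k' : ℕ,
    cplx U x (Nat.pair a k) ≤ cplx U x (Nat.pair a k')
      + (2 * Nat.log 2 (Nat.dist k k' + 1) + c) := by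
  obtain ⟨c, hc⟩ := hU.2 (W2 U) (W2_partrec hU.1)
  refine ⟨c + 2, fun x a k k' => ?_⟩
  obtain ⟨q, hql, hq⟩ := cplx_spec hU x (Nat.pair a k')
  obtain ⟨s, hsl, hsv⟩ := gval_exists (Nat.dist k k')
  have hmem : x ∈ W2 U (mkProg (decide (k ≤ k')) s q) (Nat.pair a k) := by
    rw [W2, mkProg_pprog, Nat.unpair_pair]
    show x ∈ U q (Nat.pair a (pshift _ k))
    rw [mkProg_pshift s q hsv rfl]
    exact hq
  obtain ⟨q', hq'l, hq'⟩ := hc _ (Nat.pair a k) x hmem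
  calc cplx U x (Nat.pair a k) ≤ q'.length := cplx_le hq'
    _ ≤ (mkProg (decide (k ≤ k')) s q).length + c := hq'l
    _ = _ := by rw [mkProg_length, hsl, hql]; omega


include hU in
lemma cplx_translate_dist : ∃ c : ℕ, ∀ x l l' : ℕ,
    Nat.dist (cplx U x l) (cplx U x l') ≤ 2 * Nat.log 2 (Nat.dist l l' + 1) + c := by
  obtain ⟨c, hc⟩ := cplx_translate hU
  refine ⟨c, fun x l l' => ?_⟩
  have h1 := hc x l l'
  have h2 := hc x l' l
  rw [Nat.dist_comm l' l] at h2
  simp only [Nat.dist] at *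
  omega

include hU in
lemma cplx_translate_pair_dist : ∃ c : ℕ, ∀ x a k k' : ℕ,
    Nat.dist (cplx U x (Nat.pair a k)) (cplx U x (Nat.pair a k'))
      ≤ 2 * Nat.log 2 (Nat.dist k k' + 1) + c := by
  obtain ⟨c, hc⟩ := cplx_translate_pair hU
  refine ⟨c, fun x a k k' => ?_⟩
  have h1 := hc x a k k'
  have h2 := hc x a k' k
  rw [Nat.dist_comm k' k] at h2
  simp only [Nat.dist] at *
  omega

end cplxFacts

lemma int_abs_cast (a b : ℕ) : |(a:ℤ) - b| = (Nat.dist a b : ℤ) := by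
  rcases le_total a b with h | h
  · rw [Nat.dist_eq_sub_of_le h, abs_sub_comm,
      abs_of_nonneg (sub_nonneg.2 (by exact_mod_cast h)), Nat.cast_sub h]
  · rw [Nat.dist_eq_sub_of_le_right h,
      abs_of_nonneg (sub_nonneg.2 (by exact_mod_cast h)), Nat.cast_sub h]

lemma log_le_two_sqrt (n : ℕ) : Nat.log 2 n ≤ 2 * Nat.sqrt n := by
  rcases Nat.eq_zero_or_pos n with h | h
  · simp [h]
  · have h1 : n < (Nat.sqrt n + 1) * (Nat.sqrt n + 1) := Nat.lt_succ_sqrt n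
    have h2 : Nat.sqrt n + 1 ≤ 2 ^ Nat.sqrt n := Nat.lt_two_pow_self (n := Nat.sqrt n)
    have h3 : n < 2 ^ (2 * Nat.sqrt n) := by
      calc n < (Nat.sqrt n + 1) * (Nat.sqrt n + 1) := h1
        _ ≤ 2 ^ Nat.sqrt n * 2 ^ Nat.sqrt n := Nat.mul_le_mul h2 h2
        _ = 2 ^ (2 * Nat.sqrt n) := by rw [← pow_add]; ring_nf
    exact le_of_lt (Nat.log_lt_of_lt_pow (by omega) h3)

lemma log_two_two : Nat.log 2 2 = 1 := by
  have := Nat.log_pow (b := 2) (by norm_num) 1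
  simpa using this

/-- Discrete crossing lemma: a function with bounded increments that eventually
drops below the diagonal has an approximate fixed point. -/
lemma crossing {g : ℕ → ℕ} {E : ℕ} (hstep : ∀ m, Nat.dist (g (m + 1)) (g m) ≤ E)
    (hex : ∃ l, g l ≤ l) : ∃ l, Nat.dist (g l) l ≤ E := by
  classical
  have hL : g (Nat.find hex) ≤ Nat.find hex := Nat.find_spec hex
  rcases Nat.eq_zero_or_pos (Nat.find hex) with h0 | h0
  · refine ⟨Nat.find hex, ?_⟩
    rw [h0] at hL ⊢
    simp only [Nat.dist]
    omega
  · obtain ⟨m, hm⟩ : ∃ m, Nat.find hex = m + 1 := ⟨Nat.find hex - 1, by omega⟩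
    have hgm : ¬ g m ≤ m := Nat.find_min hex (by omega)
    have hst := hstep m
    refine ⟨Nat.find hex, ?_⟩
    rw [hm] at hL ⊢
    simp only [Nat.dist] at *
    omega

end KolmoAux


/-- `C(i|i') ≤ log₂(|i − i'| + 1) + c` and symmetrically; consequently
the map `F : (k,l) ↦ (C(x|l), C(y|x,k))` sends pairs at distance `d` to pairs at distance
`O(log d)`, which yields existence and `O(1)`-uniqueness of a fixed point of `F`. -/
theorem nearby_numbers_and_fixed_point (U : Machine) (hU : IsOptimal U) :
    (∃ c : ℕ, ∀ i i' : ℕ,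
        cplx U i i' ≤ Nat.log 2 (Nat.dist i i' + 1) + c ∧
        cplx U i' i ≤ Nat.log 2 (Nat.dist i i' + 1) + c) ∧
    (∃ c : ℕ, ∀ (x y : BinStr) (k l k' l' : ℕ),
        max (Nat.dist (cplx U (enc x) l) (cplx U (enc x) l'))
            (Nat.dist (cplx U (enc y) (Nat.pair (enc x) k))
              (cplx U (enc y) (Nat.pair (enc x) k'))) ≤
          c * Nat.log 2 (max (Nat.dist k k') (Nat.dist l l') + 1) + c) ∧
    (∃ c : ℕ, ∀ x y : BinStr, ∃ k l : ℕ,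
        |(cplx U (enc x) l : ℤ) - (k : ℤ)| ≤ (c : ℤ) ∧
        |(cplx U (enc y) (Nat.pair (enc x) k) : ℤ) - (l : ℤ)| ≤ (c : ℤ)) ∧
    (∀ c₀ : ℕ, ∃ c : ℕ, ∀ (x y : BinStr) (k l k' l' : ℕ),
        |(cplx U (enc x) l : ℤ) - (k : ℤ)| ≤ (c₀ : ℤ) →
        |(cplx U (enc y) (Nat.pair (enc x) k) : ℤ) - (l : ℤ)| ≤ (c₀ : ℤ) →
        |(cplx U (enc x) l' : ℤ) - (k' : ℤ)| ≤ (c₀ : ℤ) →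
        |(cplx U (enc y) (Nat.pair (enc x) k') : ℤ) - (l' : ℤ)| ≤ (c₀ : ℤ) →
        |(k : ℤ) - (k' : ℤ)| ≤ (c : ℤ) ∧ |(l : ℤ) - (l' : ℤ)| ≤ (c : ℤ)) := by
  classical
  obtain ⟨c1, hc1⟩ := KolmoAux.cplx_nearby hU
  obtain ⟨c3, hc3⟩ := KolmoAux.cplx_translate_dist hU
  obtain ⟨c4, hc4⟩ := KolmoAux.cplx_translate_pair_dist hU
  refine ⟨⟨c1, fun i i' => ⟨hc1 i i', ?_⟩⟩, ?_, ?_, ?_⟩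
  · have h := hc1 i' i
    rwa [Nat.dist_comm i' i] at h
  · -- distance contraction
    refine ⟨c3 + c4 + 2, fun x y k l k' l' => ?_⟩
    set D := max (Nat.dist k k') (Nat.dist l l') with hD
    have hm1 : Nat.log 2 (Nat.dist l l' + 1) ≤ Nat.log 2 (D + 1) :=
      Nat.log_mono_right (by
        have := le_max_right (Nat.dist k k') (Nat.dist l l'); omega)
    have hm2 : Nat.log 2 (Nat.dist k k' + 1) ≤ Nat.log 2 (D + 1) :=
      Nat.log_mono_right (by
        have := le_max_left (Nat.dist k k') (Nat.dist l l'); omega)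
    have h1 := hc3 (enc x) l l'
    have h2 := hc4 (enc y) (enc x) k k'
    refine max_le ?_ ?_
    · calc Nat.dist (cplx U (enc x) l) (cplx U (enc x) l')
          ≤ 2 * Nat.log 2 (Nat.dist l l' + 1) + c3 := h1
        _ ≤ (c3 + c4 + 2) * Nat.log 2 (D + 1) + (c3 + c4 + 2) :=
          Nat.add_le_add (Nat.mul_le_mul (by omega) hm1) (by omega)
    · calc Nat.dist (cplx U (enc y) (Nat.pair (enc x) k))
            (cplx U (enc y) (Nat.pair (enc x) k'))
          ≤ 2 * Nat.log 2 (Nat.dist k k' + 1) + c4 := h2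
        _ ≤ (c3 + c4 + 2) * Nat.log 2 (D + 1) + (c3 + c4 + 2) :=
          Nat.add_le_add (Nat.mul_le_mul (by omega) hm2) (by omega)
  · -- existence of a fixed point
    refine ⟨2 * Nat.log 2 (c3 + 3) + c4, fun x y => ?_⟩
    obtain ⟨B, hB⟩ := KolmoAux.cplx_bounded hU (enc y)
    have hstep : ∀ m, Nat.dist
        (cplx U (enc y) (Nat.pair (enc x) (cplx U (enc x) (m + 1))))
        (cplx U (enc y) (Nat.pair (enc x) (cplx U (enc x) m)))
        ≤ 2 * Nat.log 2 (c3 + 3) + c4 := by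
      intro m
      have h1 : Nat.dist (cplx U (enc x) (m + 1)) (cplx U (enc x) m) ≤ 2 + c3 := by
        have h := hc3 (enc x) (m + 1) m
        have hd : Nat.dist (m + 1) m = 1 := by simp [Nat.dist]
        rw [hd] at h
        have hl2 : Nat.log 2 (1 + 1) = 1 := KolmoAux.log_two_two
        omega
      have h2 := hc4 (enc y) (enc x) (cplx U (enc x) (m + 1)) (cplx U (enc x) m)
      have hmono : Nat.log 2
          (Nat.dist (cplx U (enc x) (m + 1)) (cplx U (enc x) m) + 1)
          ≤ Nat.log 2 (c3 + 3) := Nat.log_mono_right (by omega)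
      omega
    have hex : ∃ l, cplx U (enc y) (Nat.pair (enc x) (cplx U (enc x) l)) ≤ l :=
      ⟨B, hB _⟩
    obtain ⟨l, hl⟩ := KolmoAux.crossing hstep hex
    refine ⟨cplx U (enc x) l, l, by simp only [sub_self, abs_zero]; positivity, ?_⟩
    rw [KolmoAux.int_abs_cast]
    exact_mod_cast hl
  · -- uniqueness of the fixed point up to O(1)
    intro c₀
    refine ⟨(c3 + c4 + 2 * c₀ + 9) ^ 2, fun x y k l k' l' h1 h2 h3 h4 => ?_⟩
    rw [KolmoAux.int_abs_cast] at h1 h2 h3 h4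
    replace h1 : Nat.dist (cplx U (enc x) l) k ≤ c₀ := by exact_mod_cast h1
    replace h2 : Nat.dist (cplx U (enc y) (Nat.pair (enc x) k)) l ≤ c₀ := by
      exact_mod_cast h2
    replace h3 : Nat.dist (cplx U (enc x) l') k' ≤ c₀ := by exact_mod_cast h3
    replace h4 : Nat.dist (cplx U (enc y) (Nat.pair (enc x) k')) l' ≤ c₀ := by
      exact_mod_cast h4
    have h1c : Nat.dist k (cplx U (enc x) l) ≤ c₀ := by
      rwa [Nat.dist_comm] at h1
    have h2c : Nat.dist l (cplx U (enc y) (Nat.pair (enc x) k)) ≤ c₀ := by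
      rwa [Nat.dist_comm] at h2
    have hkk := hc3 (enc x) l l'
    have hll := hc4 (enc y) (enc x) k k'
    have tk1 := Nat.dist.triangle_inequality k (cplx U (enc x) l) k'
    have tk2 := Nat.dist.triangle_inequality (cplx U (enc x) l)
      (cplx U (enc x) l') k'
    have tl1 := Nat.dist.triangle_inequality l
      (cplx U (enc y) (Nat.pair (enc x) k)) l'
    have tl2 := Nat.dist.triangle_inequality (cplx U (enc y) (Nat.pair (enc x) k))
      (cplx U (enc y) (Nat.pair (enc x) k')) l'
    set a := c3 + c4 + 2 * c₀ with ha
    set dk := Nat.dist k k' with hdk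
    set dl := Nat.dist l l' with hdl
    set D := max dk dl with hD
    have hm1 : Nat.log 2 (dl + 1) ≤ Nat.log 2 (D + 1) :=
      Nat.log_mono_right (by have := le_max_right dk dl; omega)
    have hm2 : Nat.log 2 (dk + 1) ≤ Nat.log 2 (D + 1) :=
      Nat.log_mono_right (by have := le_max_left dk dl; omega)
    have hDle : D ≤ 2 * Nat.log 2 (D + 1) + a := by
      have t1 : dk ≤ 2 * Nat.log 2 (D + 1) + a := by omega
      have t2 : dl ≤ 2 * Nat.log 2 (D + 1) + a := by omega
      omega
    have hfinal : D ≤ (a + 9) ^ 2 := by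
      by_contra hcon
      push_neg at hcon
      have h' : (a + 9) * (a + 9) ≤ D := by
        have := le_of_lt hcon
        rwa [pow_two] at this
      have hs : a + 9 ≤ Nat.sqrt D := Nat.le_sqrt.2 h'
      have hsD : Nat.sqrt D * Nat.sqrt D ≤ D := Nat.sqrt_le D
      have hlog : Nat.log 2 (D + 1) ≤ 2 * Nat.sqrt (D + 1) :=
        KolmoAux.log_le_two_sqrt _
      have hsq : Nat.sqrt (D + 1) ≤ Nat.sqrt D + 1 :=
        Nat.sqrt_succ_le_succ_sqrt D
      have hDb : D ≤ 4 * Nat.sqrt D + 4 + a := by omega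
      nlinarith [Nat.mul_le_mul_right (Nat.sqrt D) hs, hsD, hDb, hs]
    constructor
    · rw [KolmoAux.int_abs_cast]
      exact_mod_cast le_trans (le_max_left dk dl) hfinal
    · rw [KolmoAux.int_abs_cast]
      exact_mod_cast le_trans (le_max_right dk dl) hfinal
end
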